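/- arXiv:2002.06422 — 4 statements merged into one kernel-verified Lean document; each statement's English description precedes it below -/
import Mathlib

section
/- Let ρ(x) = (|x_H|^4 + x_{2d+1}^2)^{1/4} be the gauge norm on the Heisenberg group H^d and f : (0,∞) → R be C^2. Then at any point with ρ > 0, the eigenvalues of the symmetrized horizontal Hessian D^2_{H^d} f(ρ) are: f''(ρ)|D_{H^d}ρ|^2 (simple), 3 f'(ρ)|D_{H^d}ρ|^2/ρ (simple), and f'(ρ)|D_{H^d}ρ|^2/ρ with multiplicity 2d−2. -/
open Matrix MeasureTheory Real Set

noncomputable def pucciPlus (l L : ℝ) {n : ℕ} {M : Matrix (Fin n) (Fin n) ℝ}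
    (hM : M.IsHermitian) : ℝ :=
  ∑ i, (L * max (hM.eigenvalues i) 0 + l * min (hM.eigenvalues i) 0)

noncomputable def pucciMinus (l L : ℝ) {n : ℕ} {M : Matrix (Fin n) (Fin n) ℝ}
    (hM : M.IsHermitian) : ℝ :=
  ∑ i, (l * max (hM.eigenvalues i) 0 + L * min (hM.eigenvalues i) 0)

noncomputable def heisVF (d : ℕ) (i : Fin (2*d)) (x : Fin (2*d+1) → ℝ) : Fin (2*d+1) → ℝ :=
  if _h : (i : ℕ) < d then
    (Pi.single (Fin.castSucc i) 1 : Fin (2*d+1) → ℝ)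
      + (2 * x ⟨(i:ℕ) + d, by omega⟩) • (Pi.single (Fin.last (2*d)) 1 : Fin (2*d+1) → ℝ)
  else
    (Pi.single (Fin.castSucc i) 1 : Fin (2*d+1) → ℝ)
      - (2 * x ⟨(i:ℕ) - d, by omega⟩) • (Pi.single (Fin.last (2*d)) 1 : Fin (2*d+1) → ℝ)

noncomputable def hGrad (d : ℕ) (u : (Fin (2*d+1) → ℝ) → ℝ) (x : Fin (2*d+1) → ℝ) :
    Fin (2*d) → ℝ := fun i => fderiv ℝ u x (heisVF d i x)

noncomputable def hGradSq (d : ℕ) (u : (Fin (2*d+1) → ℝ) → ℝ) (x : Fin (2*d+1) → ℝ) : ℝ :=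
  ∑ i : Fin (2*d), (hGrad d u x i) ^ 2

noncomputable def hHess (d : ℕ) (u : (Fin (2*d+1) → ℝ) → ℝ) (x : Fin (2*d+1) → ℝ) :
    Matrix (Fin (2*d)) (Fin (2*d)) ℝ :=
  Matrix.of fun i j =>
    (fderiv ℝ (fun y => hGrad d u y j) x (heisVF d i x)
      + fderiv ℝ (fun y => hGrad d u y i) x (heisVF d j x)) / 2

lemma hHess_herm (d : ℕ) (u : (Fin (2*d+1) → ℝ) → ℝ) (x : Fin (2*d+1) → ℝ) :
    (hHess d u x).IsHermitian := by
  unfold Matrix.IsHermitian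
  ext i j
  simp [hHess, Matrix.conjTranspose_apply, add_comm]

/-- The Koranyi gauge norm on the Heisenberg group `ℍ^d ≃ ℝ^{2d+1}`. -/
noncomputable def hGauge (d : ℕ) (x : Fin (2*d+1) → ℝ) : ℝ :=
  ((∑ i : Fin (2*d), x (Fin.castSucc i) ^ 2) ^ 2 + x (Fin.last (2*d)) ^ 2) ^ (1/4 : ℝ)



section HeisProofAux
open Polynomial


lemma charpoly_eval' {n : Type*} [Fintype n] [DecidableEq n] (M : Matrix n n ℝ) (r : ℝ) :
    M.charpoly.eval r = (r • (1 : Matrix n n ℝ) - M).det := by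
  rw [Matrix.charpoly, eval_det, Matrix.matPolyEquiv_charmatrix]
  simp [smul_eq_diagonal_mul, Matrix.scalar]
  rfl

lemma det_smul_one_sub_mul {K : Type*} [Field K] {n m : Type*} [Fintype n] [Fintype m]
    [DecidableEq n] [DecidableEq m] [Nonempty n] [Nonempty m]
    (ν : K) (A : Matrix n m K) (B : Matrix m n K) :
    (ν • (1 : Matrix n n K) - A * B).det * ν ^ (Fintype.card m)
      = ν ^ (Fintype.card n) * (ν • (1 : Matrix m m K) - B * A).det := by
  rcases eq_or_ne ν 0 with rfl | hν
  · simp [zero_pow (Fintype.card_ne_zero (α := m)), zero_pow (Fintype.card_ne_zero (α := n))]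
  · have h1 : ν • (1 : Matrix n n K) - A * B = ν • ((1 : Matrix n n K) - A * (ν⁻¹ • B)) := by
      rw [smul_sub, Matrix.mul_smul, smul_smul, mul_inv_cancel₀ hν, one_smul]
    have h2 : ν • (1 : Matrix m m K) - B * A = ν • ((1 : Matrix m m K) - (ν⁻¹ • B) * A) := by
      rw [smul_sub, Matrix.smul_mul, smul_smul, mul_inv_cancel₀ hν, one_smul]
    rw [h1, h2, Matrix.det_smul, Matrix.det_smul, Matrix.det_one_sub_mul_comm]
    ring

lemma charpoly_conj' {n : Type*} [Fintype n] [DecidableEq n] (U D : Matrix n n ℝ)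
    (h1 : U * star U = 1) (h2 : star U * U = 1) :
    (U * D * star U).charpoly = D.charpoly := by
  let C' : Matrix n n ℝ →+* Matrix n n ℝ[X] := (Polynomial.C : ℝ →+* ℝ[X]).mapMatrix
  have key : charmatrix (U * D * star U) = C' U * charmatrix D * C' (star U) := by
    unfold Matrix.charmatrix
    rw [Matrix.mul_sub, Matrix.sub_mul]
    congr 1
    · rw [show (Matrix.scalar n (X : ℝ[X])) = (X : ℝ[X]) • (1 : Matrix n n ℝ[X]) by
        ext i j; simp [Matrix.scalar, Matrix.one_apply, Matrix.diagonal, Matrix.smul_apply]]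
      rw [Matrix.mul_smul, Matrix.smul_mul, Matrix.mul_one, ← _root_.map_mul, h1, _root_.map_one]
    · simp only [C', ← _root_.map_mul]
  rw [Matrix.charpoly, Matrix.charpoly, key, Matrix.det_mul, Matrix.det_mul]
  have : (C' U).det * (C' (star U)).det = 1 := by
    rw [mul_comm, ← Matrix.det_mul, ← _root_.map_mul, h2, _root_.map_one, Matrix.det_one]
  calc (C' U).det * (charmatrix D).det * (C' (star U)).det
      = (C' U).det * (C' (star U)).det * (charmatrix D).det := by ring
    _ = (charmatrix D).det := by rw [this]; ring

lemma charpoly_diagonal' {n : Type*} [Fintype n] [DecidableEq n] (v : n → ℝ) :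
    (Matrix.diagonal v).charpoly = ∏ i, (X - Polynomial.C (v i)) := by
  rw [Matrix.charpoly]
  have : charmatrix (Matrix.diagonal v) = Matrix.diagonal (fun i => X - Polynomial.C (v i)) := by
    ext i j
    by_cases h : i = j
    · subst h; simp [Matrix.charmatrix_apply_eq]
    · simp [Matrix.charmatrix_apply_ne _ _ _ h, Matrix.diagonal_apply_ne _ h]
  rw [this, Matrix.det_diagonal]

lemma herm_charpoly {n : ℕ} (M : Matrix (Fin n) (Fin n) ℝ) (hM : M.IsHermitian) :
    M.charpoly
      = ((Finset.univ.val.map hM.eigenvalues).map (fun r => X - Polynomial.C r)).prod := by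
  have hs := hM.spectral_theorem
  have hdiag : Matrix.diagonal (RCLike.ofReal ∘ hM.eigenvalues) = Matrix.diagonal hM.eigenvalues := by
    congr 1
  have hU1 : (hM.eigenvectorUnitary : Matrix (Fin n) (Fin n) ℝ)
      * star (hM.eigenvectorUnitary : Matrix (Fin n) (Fin n) ℝ) = 1 :=
    Matrix.mem_unitaryGroup_iff.mp hM.eigenvectorUnitary.2
  have hU2 : star (hM.eigenvectorUnitary : Matrix (Fin n) (Fin n) ℝ)
      * (hM.eigenvectorUnitary : Matrix (Fin n) (Fin n) ℝ) = 1 :=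
    Matrix.mem_unitaryGroup_iff'.mp hM.eigenvectorUnitary.2
  calc M.charpoly
      = ((hM.eigenvectorUnitary : Matrix (Fin n) (Fin n) ℝ)
          * Matrix.diagonal hM.eigenvalues
          * star (hM.eigenvectorUnitary : Matrix (Fin n) (Fin n) ℝ)).charpoly := by
        conv_lhs => rw [hs]
        rw [hdiag]
        rfl
    _ = (Matrix.diagonal hM.eigenvalues).charpoly := charpoly_conj' _ _ hU1 hU2
    _ = ∏ i, (X - Polynomial.C (hM.eigenvalues i)) := charpoly_diagonal' _
    _ = _ := by
        rw [Finset.prod]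
        rw [Multiset.map_map]
        rfl

lemma eigen_multiset_of (d : ℕ) (hd : 1 ≤ d) (M : Matrix (Fin (2*d)) (Fin (2*d)) ℝ)
    (hM : M.IsHermitian) (w z g : Fin (2*d) → ℝ) (a b c s t N : ℝ)
    (hg : ∀ i, g i = s * w i + t * z i)
    (hww : ∑ i, w i ^ 2 = s) (hzz : ∑ i, z i ^ 2 = s) (hwz : ∑ i, w i * z i = 0)
    (hN : N = s^2 + t^2)
    (hMdef : ∀ i j, M i j = a * g i * g j + b * (w i * w j + z i * z j)
      + (if i = j then c else 0)) :
    (Finset.univ.val.map hM.eigenvalues : Multiset ℝ)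
      = (c + s*b + s*a*N) ::ₘ (c + s*b) ::ₘ Multiset.replicate (2*d - 2) c := by
  haveI : Nonempty (Fin (2*d)) := ⟨⟨0, by omega⟩⟩
  set W : Matrix (Fin (2*d)) (Fin 2) ℝ := Matrix.of fun i k => if k = 0 then w i else z i with hW
  set Q : Matrix (Fin 2) (Fin (2*d)) ℝ :=
    Matrix.of fun k j => if k = 0 then a*s*g j + b*w j else a*t*g j + b*z j with hQ
  -- sums
  have hgw : ∑ j, g j * w j = s * s := by
    have e : ∀ j : Fin (2*d), g j * w j = s * (w j ^ 2) + t * (w j * z j) := fun j => by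
      rw [hg]; ring
    rw [Finset.sum_congr rfl fun j _ => e j, Finset.sum_add_distrib, ← Finset.mul_sum,
      ← Finset.mul_sum, hww, hwz]; ring
  have hgz : ∑ j, g j * z j = t * s := by
    have e : ∀ j : Fin (2*d), g j * z j = s * (w j * z j) + t * (z j ^ 2) := fun j => by
      rw [hg]; ring
    rw [Finset.sum_congr rfl fun j _ => e j, Finset.sum_add_distrib, ← Finset.mul_sum,
      ← Finset.mul_sum, hzz, hwz]; ring
  -- M = c•1 + W*Q
  have hP : M = c • (1 : Matrix (Fin (2*d)) (Fin (2*d)) ℝ) + W * Q := by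
    ext i j
    rw [hMdef]
    simp only [Matrix.add_apply, Matrix.smul_apply, Matrix.one_apply, Matrix.mul_apply,
      Fin.sum_univ_two, hW, hQ, Matrix.of_apply]
    rw [hg i]
    simp only [smul_eq_mul]
    split <;> simp <;> ring
  have hww' : ∑ j, w j * w j = s := by
    rw [← hww]; exact Finset.sum_congr rfl fun j _ => (sq (w j)).symm ▸ (by ring)
  have hzz' : ∑ j, z j * z j = s := by
    rw [← hzz]; exact Finset.sum_congr rfl fun j _ => by ring
  have hzw : ∑ j, z j * w j = 0 := by
    rw [← hwz]; exact Finset.sum_congr rfl fun j _ => by ring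
  have hlin : ∀ (α β : ℝ) (u v : Fin (2*d) → ℝ), (∑ j, (α * g j + β * u j) * v j)
      = α * (∑ j, g j * v j) + β * (∑ j, u j * v j) := by
    intro α β u v
    rw [Finset.mul_sum, Finset.mul_sum, ← Finset.sum_add_distrib]
    exact Finset.sum_congr rfl fun j _ => by ring
  -- Q * W explicit entries
  have e00 : (Q * W) 0 0 = a*s*(s*s) + b*s := by
    simp only [Matrix.mul_apply, hW, hQ, Matrix.of_apply]
    norm_num
    rw [hlin (a*s) b w w, hgw, hww']
  have e01 : (Q * W) 0 1 = a*s*(t*s) := by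
    simp only [Matrix.mul_apply, hW, hQ, Matrix.of_apply]
    norm_num
    rw [hlin (a*s) b w z, hgz, hwz]
    ring
  have e10 : (Q * W) 1 0 = a*t*(s*s) := by
    simp only [Matrix.mul_apply, hW, hQ, Matrix.of_apply]
    norm_num
    rw [hlin (a*t) b z w, hgw, hzw]
    ring
  have e11 : (Q * W) 1 1 = a*t*(t*s) + b*s := by
    simp only [Matrix.mul_apply, hW, hQ, Matrix.of_apply]
    norm_num
    rw [hlin (a*t) b z z, hgz, hzz']
  have hQW : ∀ ν : ℝ, (ν • (1 : Matrix (Fin 2) (Fin 2) ℝ) - Q * W).det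
      = (ν - s*b) * (ν - s*b - s*a*N) := by
    intro ν
    rw [Matrix.det_fin_two]
    simp only [Matrix.sub_apply, Matrix.smul_apply, Matrix.one_apply, smul_eq_mul]
    rw [e00, e01, e10, e11]
    norm_num [hN]
    ring
  -- the characteristic polynomial
  have hcharev : ∀ μ : ℝ, M.charpoly.eval μ * (μ - c)^2
      = (μ - c)^(2*d) * ((μ - c - s*b) * (μ - c - s*b - s*a*N)) := by
    intro μ
    rw [charpoly_eval']
    have hM' : μ • (1 : Matrix (Fin (2*d)) (Fin (2*d)) ℝ) - M
        = (μ - c) • 1 - W * Q := by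
      rw [hP, sub_smul]
      abel
    rw [hM']
    have := det_smul_one_sub_mul (μ - c) W Q
    rw [Fintype.card_fin, Fintype.card_fin] at this
    rw [this, hQW]
  have hT : M.charpoly = (X - Polynomial.C (c + s*b + s*a*N)) *
      ((X - Polynomial.C (c + s*b)) * (X - Polynomial.C c)^(2*d-2)) := by
    apply mul_right_cancel₀ (pow_ne_zero 2 (Polynomial.X_sub_C_ne_zero c))
    apply Polynomial.funext
    intro μ
    simp only [Polynomial.eval_mul, Polynomial.eval_pow, Polynomial.eval_sub,
      Polynomial.eval_X, Polynomial.eval_C]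
    have hpow : (μ - c)^(2*d) = (μ - c)^(2*d-2) * (μ - c)^2 := by
      rw [← pow_add]; congr 1; omega
    rw [hcharev μ, hpow]
    ring
  -- conclude via roots
  have h1 := herm_charpoly M hM
  have h2 : M.charpoly = (((c + s*b + s*a*N) ::ₘ (c + s*b) ::ₘ
      Multiset.replicate (2*d - 2) c).map (fun r => X - Polynomial.C r)).prod := by
    rw [hT]
    simp [Multiset.map_cons, Multiset.prod_cons, Multiset.map_replicate,
      Multiset.prod_replicate]
  have := congrArg Polynomial.roots (h1.symm.trans h2)
  rwa [Polynomial.roots_multiset_prod_X_sub_C, Polynomial.roots_multiset_prod_X_sub_C] at this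

namespace HeisAux

variable (d : ℕ)

def sf (y : Fin (2*d+1) → ℝ) : ℝ := ∑ i : Fin (2*d), y (Fin.castSucc i) ^ 2
def tf (y : Fin (2*d+1) → ℝ) : ℝ := y (Fin.last (2*d))
def Nf (y : Fin (2*d+1) → ℝ) : ℝ := sf d y ^ 2 + tf d y ^ 2
noncomputable def zf (i : Fin (2*d)) (y : Fin (2*d+1) → ℝ) : ℝ :=
  if h : (i:ℕ) < d then y ⟨(i:ℕ) + d, by omega⟩
  else - y ⟨(i:ℕ) - d, by exact Nat.lt_succ_of_lt (lt_of_le_of_lt (Nat.sub_le _ _) i.isLt)⟩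
noncomputable def gf (i : Fin (2*d)) (y : Fin (2*d+1) → ℝ) : ℝ :=
  sf d y * y (Fin.castSucc i) + tf d y * zf d i y

lemma heisVF_eq (i : Fin (2*d)) (y : Fin (2*d+1) → ℝ) :
    heisVF d i y = (Pi.single (Fin.castSucc i) 1 : Fin (2*d+1) → ℝ)
      + (2 * zf d i y) • (Pi.single (Fin.last (2*d)) 1 : Fin (2*d+1) → ℝ) := by
  unfold heisVF zf
  split_ifs with h
  · rfl
  · rw [mul_neg, neg_smul, ← sub_eq_add_neg]

lemma heis_apply_cast (i j : Fin (2*d)) (y : Fin (2*d+1) → ℝ) :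
    heisVF d i y (Fin.castSucc j) = if j = i then 1 else 0 := by
  rw [heisVF_eq]
  have hne : Fin.castSucc j ≠ Fin.last (2*d) := (Fin.castSucc_lt_last j).ne
  simp [Pi.single_apply, hne, Fin.castSucc_inj, eq_comm]

lemma heis_apply_last (i : Fin (2*d)) (y : Fin (2*d+1) → ℝ) :
    heisVF d i y (Fin.last (2*d)) = 2 * zf d i y := by
  rw [heisVF_eq]
  have hne : Fin.last (2*d) ≠ Fin.castSucc i := (Fin.castSucc_lt_last i).ne'
  simp [Pi.single_apply, hne]

lemma heis_apply_mk (i : Fin (2*d)) (y : Fin (2*d+1) → ℝ) (k : ℕ) (hk : k < 2*d) :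
    heisVF d i y ⟨k, by omega⟩ = if k = (i:ℕ) then 1 else 0 := by
  have : (⟨k, by omega⟩ : Fin (2*d+1)) = Fin.castSucc ⟨k, hk⟩ := rfl
  rw [this, heis_apply_cast]
  simp [Fin.ext_iff]


-- permutation i ↦ i ± d
def phi : Fin (2*d) ≃ Fin (2*d) where
  toFun i := if h : (i:ℕ) < d then ⟨(i:ℕ) + d, by omega⟩
    else ⟨(i:ℕ) - d, by exact lt_of_le_of_lt (Nat.sub_le _ _) i.isLt⟩
  invFun i := if h : (i:ℕ) < d then ⟨(i:ℕ) + d, by omega⟩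
    else ⟨(i:ℕ) - d, by exact lt_of_le_of_lt (Nat.sub_le _ _) i.isLt⟩
  left_inv i := by
    by_cases h : (i:ℕ) < d
    · have h2 : ¬ ((i:ℕ) + d < d) := by omega
      simp only [dif_pos h, dif_neg h2]
      ext; simp; try omega
    · have h2 : (i:ℕ) - d < d := by omega
      simp only [dif_neg h, dif_pos h2]
      ext; simp; try omega
  right_inv i := by
    by_cases h : (i:ℕ) < d
    · have h2 : ¬ ((i:ℕ) + d < d) := by omega
      simp only [dif_pos h, dif_neg h2]
      ext; simp; try omega
    · have h2 : (i:ℕ) - d < d := by omega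
      simp only [dif_neg h, dif_pos h2]
      ext; simp; try omega

lemma zf_eq_phi (i : Fin (2*d)) (y : Fin (2*d+1) → ℝ) :
    zf d i y = (if (i:ℕ) < d then (1:ℝ) else -1) * y (Fin.castSucc (phi d i)) := by
  unfold zf phi
  by_cases h : (i:ℕ) < d
  · rw [dif_pos h, if_pos h, Equiv.coe_fn_mk, dif_pos h, one_mul]; rfl
  · rw [dif_neg h, if_neg h, Equiv.coe_fn_mk, dif_neg h, neg_one_mul]; rfl

lemma phi_lt (i : Fin (2*d)) (hd : 1 ≤ d) : ((phi d i : Fin (2*d)) : ℕ) < d ↔ ¬ ((i:ℕ) < d) := by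
  unfold phi
  by_cases h : (i:ℕ) < d
  · rw [Equiv.coe_fn_mk, dif_pos h]; simp; omega
  · rw [Equiv.coe_fn_mk, dif_neg h]; simp [h]; omega

lemma phi_phi (i : Fin (2*d)) : phi d (phi d i) = i := (phi d).left_inv i

lemma sum_zf_sq (y : Fin (2*d+1) → ℝ) : ∑ i : Fin (2*d), (zf d i y)^2 = sf d y := by
  calc ∑ i : Fin (2*d), (zf d i y)^2
      = ∑ i : Fin (2*d), (fun j => y (Fin.castSucc j) ^ 2) (phi d i) :=
        Finset.sum_congr rfl fun i _ => by rw [zf_eq_phi]; split_ifs <;> ring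
    _ = ∑ i : Fin (2*d), y (Fin.castSucc i) ^ 2 := Equiv.sum_comp (phi d) (fun j => y (Fin.castSucc j) ^ 2)
    _ = sf d y := rfl

lemma sum_w_zf (y : Fin (2*d+1) → ℝ) (hd : 1 ≤ d) :
    ∑ i : Fin (2*d), y (Fin.castSucc i) * zf d i y = 0 := by
  have key : ∀ i : Fin (2*d),
      (fun j => y (Fin.castSucc j) * zf d j y) (phi d i)
        = - (y (Fin.castSucc i) * zf d i y) := by
    intro i
    simp only
    rw [zf_eq_phi d (phi d i), phi_phi, zf_eq_phi d i]
    rcases lt_or_ge (i:ℕ) d with h | h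
    · rw [if_pos h, if_neg (by rw [phi_lt d i hd]; simpa using h)]
      ring
    · rw [if_neg (not_lt.mpr h), if_pos ((phi_lt d i hd).mpr (not_lt.mpr h))]
      ring
  have h1 : ∑ i : Fin (2*d), y (Fin.castSucc i) * zf d i y
      = ∑ i : Fin (2*d), (fun j => y (Fin.castSucc j) * zf d j y) (phi d i) :=
    (Equiv.sum_comp (phi d) (fun j => y (Fin.castSucc j) * zf d j y)).symm
  rw [Finset.sum_congr rfl fun i _ => key i, Finset.sum_neg_distrib] at h1
  linarith


-- CLMs
noncomputable def Lp (k : Fin (2*d+1)) : (Fin (2*d+1) → ℝ) →L[ℝ] ℝ :=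
  ContinuousLinearMap.proj k

@[simp] lemma Lp_apply (k : Fin (2*d+1)) (v : Fin (2*d+1) → ℝ) : Lp d k v = v k := rfl

noncomputable def dS (y : Fin (2*d+1) → ℝ) : (Fin (2*d+1) → ℝ) →L[ℝ] ℝ :=
  ∑ i : Fin (2*d), (2 * y (Fin.castSucc i)) • Lp d (Fin.castSucc i)

lemma hasFDerivAt_sf (y : Fin (2*d+1) → ℝ) : HasFDerivAt (sf d) (dS d y) y := by
  have key : ∀ i : Fin (2*d), HasFDerivAt (fun y : Fin (2*d+1) → ℝ => y (Fin.castSucc i) ^ 2)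
      ((2 * y (Fin.castSucc i)) • Lp d (Fin.castSucc i)) y := by
    intro i
    have h := (Lp d (Fin.castSucc i)).hasFDerivAt (x := y)
    have heq : (2 * y (Fin.castSucc i)) • Lp d (Fin.castSucc i)
        = y (Fin.castSucc i) • Lp d (Fin.castSucc i)
          + y (Fin.castSucc i) • Lp d (Fin.castSucc i) := by
      ext v; simp; ring
    have hfun : (fun y : Fin (2*d+1) → ℝ => y (Fin.castSucc i) ^ 2)
        = fun y : Fin (2*d+1) → ℝ => y (Fin.castSucc i) * y (Fin.castSucc i) :=
      funext fun y => pow_two _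
    rw [heq, hfun]
    exact h.mul h
  exact HasFDerivAt.fun_sum (fun i _ => key i)

noncomputable def dN (y : Fin (2*d+1) → ℝ) : (Fin (2*d+1) → ℝ) →L[ℝ] ℝ :=
  (2 * sf d y) • dS d y + (2 * tf d y) • Lp d (Fin.last (2*d))

lemma hasFDerivAt_Nf (y : Fin (2*d+1) → ℝ) : HasFDerivAt (Nf d) (dN d y) y := by
  have hs := hasFDerivAt_sf d y
  have ht := (Lp d (Fin.last (2*d))).hasFDerivAt (x := y)
  have hfun : Nf d = fun v : Fin (2*d+1) → ℝ =>
      sf d v * sf d v + v (Fin.last (2*d)) * v (Fin.last (2*d)) :=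
    funext fun v => by unfold Nf tf; ring
  have heq : dN d y = (sf d y • dS d y + sf d y • dS d y)
      + (tf d y • Lp d (Fin.last (2*d)) + tf d y • Lp d (Fin.last (2*d))) := by
    unfold dN
    ext v; simp; ring
  rw [hfun, heq]
  exact (hs.mul hs).add (ht.mul ht)

lemma dS_heis (y : Fin (2*d+1) → ℝ) (i : Fin (2*d)) :
    dS d y (heisVF d i y) = 2 * y (Fin.castSucc i) := by
  unfold dS
  rw [ContinuousLinearMap.sum_apply]
  simp only [ContinuousLinearMap.smul_apply, Lp_apply, heis_apply_cast, smul_eq_mul]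
  rw [Finset.sum_eq_single i]
  · simp
  · intro j _ hj
    simp [hj]
  · simp

lemma dN_heis (y : Fin (2*d+1) → ℝ) (i : Fin (2*d)) :
    dN d y (heisVF d i y) = 4 * gf d i y := by
  unfold dN
  rw [ContinuousLinearMap.add_apply]
  simp only [ContinuousLinearMap.smul_apply, Lp_apply, smul_eq_mul]
  rw [dS_heis, heis_apply_last]
  unfold gf
  ring

-- derivative of zf
noncomputable def dZ (i : Fin (2*d)) : (Fin (2*d+1) → ℝ) →L[ℝ] ℝ :=
  if h : (i:ℕ) < d then Lp d ⟨(i:ℕ) + d, by omega⟩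
  else - Lp d ⟨(i:ℕ) - d, by exact Nat.lt_succ_of_lt (lt_of_le_of_lt (Nat.sub_le _ _) i.isLt)⟩

lemma hasFDerivAt_zf (i : Fin (2*d)) (y : Fin (2*d+1) → ℝ) :
    HasFDerivAt (zf d i) (dZ d i) y := by
  unfold zf dZ
  split_ifs with h
  · exact (Lp d _).hasFDerivAt
  · exact ((Lp d _).hasFDerivAt).neg

noncomputable def eps (i j : Fin (2*d)) : ℝ :=
  if (i:ℕ) < d then (if (i:ℕ) + d = (j:ℕ) then 1 else 0)
  else -(if (i:ℕ) - d = (j:ℕ) then 1 else 0)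

lemma dZ_heis (i j : Fin (2*d)) (y : Fin (2*d+1) → ℝ) :
    dZ d i (heisVF d j y) = eps d i j := by
  unfold dZ eps
  by_cases h : (i:ℕ) < d
  · rw [dif_pos h, if_pos h, Lp_apply]
    exact heis_apply_mk d j y ((i:ℕ)+d) (by omega)
  · rw [dif_neg h, if_neg h, ContinuousLinearMap.neg_apply, Lp_apply,
      heis_apply_mk d j y ((i:ℕ)-d) (lt_of_le_of_lt (Nat.sub_le _ _) i.isLt)]

lemma eps_antisymm (i j : Fin (2*d)) : eps d i j + eps d j i = 0 := by
  unfold eps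
  have hi := i.isLt
  have hj := j.isLt
  rcases lt_or_ge (i:ℕ) d with h1 | h1 <;> rcases lt_or_ge (j:ℕ) d with h2 | h2
  · rw [if_pos h1, if_pos h2, if_neg (by omega), if_neg (by omega)]; norm_num
  · rw [if_pos h1, if_neg (not_lt.mpr h2)]
    by_cases he : (i:ℕ) + d = (j:ℕ)
    · rw [if_pos he, if_pos (by omega)]; norm_num
    · rw [if_neg he, if_neg (by omega)]; norm_num
  · rw [if_neg (not_lt.mpr h1), if_pos h2]
    by_cases he : (i:ℕ) - d = (j:ℕ)
    · rw [if_pos he, if_pos (by omega)]; norm_num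
    · rw [if_neg he, if_neg (by omega)]; norm_num
  · rw [if_neg (not_lt.mpr h1), if_neg (not_lt.mpr h2), if_neg (by omega), if_neg (by omega)]
    norm_num

-- derivative of gf
noncomputable def dG (i : Fin (2*d)) (y : Fin (2*d+1) → ℝ) : (Fin (2*d+1) → ℝ) →L[ℝ] ℝ :=
  (y (Fin.castSucc i)) • dS d y + sf d y • Lp d (Fin.castSucc i)
    + ((zf d i y) • Lp d (Fin.last (2*d)) + tf d y • dZ d i)

lemma hasFDerivAt_gf (i : Fin (2*d)) (y : Fin (2*d+1) → ℝ) :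
    HasFDerivAt (gf d i) (dG d i y) y := by
  have h1 := (hasFDerivAt_sf d y).mul ((Lp d (Fin.castSucc i)).hasFDerivAt (x := y))
  have h2 := ((Lp d (Fin.last (2*d))).hasFDerivAt (x := y)).mul (hasFDerivAt_zf d i y)
  have := h1.add h2
  have hfun : gf d i = fun v : Fin (2*d+1) → ℝ =>
      sf d v * v (Fin.castSucc i) + v (Fin.last (2*d)) * zf d i v :=
    funext fun v => rfl
  rw [hfun]
  have heq : dG d i y = (sf d y • Lp d (Fin.castSucc i) + (y (Fin.castSucc i)) • dS d y)
      + ((Lp d (Fin.last (2*d))) y • dZ d i + zf d i y • Lp d (Fin.last (2*d))) := by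
    unfold dG
    ext v
    simp [tf]
    ring
  rw [heq]
  exact this

lemma dG_heis (i j : Fin (2*d)) (y : Fin (2*d+1) → ℝ) :
    dG d i y (heisVF d j y) = y (Fin.castSucc i) * (2 * y (Fin.castSucc j))
      + sf d y * (if i = j then 1 else 0)
      + (zf d i y * (2 * zf d j y) + tf d y * eps d i j) := by
  unfold dG
  simp only [ContinuousLinearMap.add_apply, ContinuousLinearMap.smul_apply, smul_eq_mul,
    Lp_apply]
  rw [dS_heis, heis_apply_cast, heis_apply_last, dZ_heis]

lemma hGauge_eq (y : Fin (2*d+1) → ℝ) : hGauge d y = Nf d y ^ (1/4 : ℝ) := rfl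

noncomputable def dRho (y : Fin (2*d+1) → ℝ) : (Fin (2*d+1) → ℝ) →L[ℝ] ℝ :=
  (1/4 * Nf d y ^ ((1/4:ℝ) - 1)) • dN d y

lemma hasFDerivAt_rho (y : Fin (2*d+1) → ℝ) (hy : 0 < Nf d y) :
    HasFDerivAt (hGauge d) (dRho d y) y := by
  have h := (Real.hasDerivAt_rpow_const (x := Nf d y) (p := (1/4:ℝ))
    (Or.inl hy.ne')).comp_hasFDerivAt y (hasFDerivAt_Nf d y)
  exact h

lemma dRho_heis (y : Fin (2*d+1) → ℝ) (i : Fin (2*d)) :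
    dRho d y (heisVF d i y) = Nf d y ^ ((1/4:ℝ) - 1) * gf d i y := by
  unfold dRho
  rw [ContinuousLinearMap.smul_apply, dN_heis]
  simp only [smul_eq_mul]
  ring

lemma hGrad_radial (f : ℝ → ℝ) (y : Fin (2*d+1) → ℝ) (hy : 0 < Nf d y)
    (hf1 : HasDerivAt f (deriv f (hGauge d y)) (hGauge d y)) (j : Fin (2*d)) :
    hGrad d (fun v => f (hGauge d v)) y j
      = deriv f (hGauge d y) * (Nf d y ^ ((1/4:ℝ) - 1) * gf d j y) := by
  unfold hGrad
  have h := hf1.comp_hasFDerivAt y (hasFDerivAt_rho d y hy)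
  rw [show (fun v => f (hGauge d v)) = f ∘ hGauge d from rfl, h.fderiv,
    ContinuousLinearMap.smul_apply, dRho_heis]
  simp only [smul_eq_mul]

lemma Nf_continuous : Continuous (Nf d) := by
  unfold Nf sf tf
  fun_prop

lemma hHess_radial_entry (f : ℝ → ℝ) (x : Fin (2*d+1) → ℝ) (hx : 0 < Nf d x)
    (hf1 : ∀ r : ℝ, 0 < r → HasDerivAt f (deriv f r) r)
    (hf2 : HasDerivAt (deriv f) (deriv (deriv f) (hGauge d x)) (hGauge d x))
    (i j : Fin (2*d)) :
    hHess d (fun y => f (hGauge d y)) x i j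
      = (deriv (deriv f) (hGauge d x) * (Nf d x ^ ((1/4:ℝ)-1))^2
          + 4*((1/4:ℝ)-1) * deriv f (hGauge d x) * Nf d x ^ ((1/4:ℝ)-1-1))
          * gf d i x * gf d j x
        + (2 * deriv f (hGauge d x) * Nf d x ^ ((1/4:ℝ)-1))
          * (x (Fin.castSucc i) * x (Fin.castSucc j) + zf d i x * zf d j x)
        + (if i = j then deriv f (hGauge d x) * sf d x * Nf d x ^ ((1/4:ℝ)-1) else 0) := by
  have hU : {y : Fin (2*d+1) → ℝ | 0 < Nf d y} ∈ nhds x :=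
    (isOpen_lt continuous_const (Nf_continuous d)).mem_nhds hx
  -- second-order derivative of the radial gradient components
  have key : ∀ i' j' : Fin (2*d),
      fderiv ℝ (fun y => hGrad d (fun v => f (hGauge d v)) y j') x (heisVF d i' x)
        = deriv (deriv f) (hGauge d x) * (Nf d x ^ ((1/4:ℝ)-1) * gf d i' x)
            * (Nf d x ^ ((1/4:ℝ)-1) * gf d j' x)
          + deriv f (hGauge d x) *
            (gf d j' x * (((1/4:ℝ)-1) * Nf d x ^ ((1/4:ℝ)-1-1) * (4 * gf d i' x))
              + Nf d x ^ ((1/4:ℝ)-1) *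
                (x (Fin.castSucc j') * (2 * x (Fin.castSucc i'))
                  + sf d x * (if j' = i' then 1 else 0)
                  + (zf d j' x * (2 * zf d i' x) + tf d x * eps d j' i'))) := by
    intro i' j'
    have heve : (fun y => hGrad d (fun v => f (hGauge d v)) y j')
        =ᶠ[nhds x] (fun y => deriv f (hGauge d y) * (Nf d y ^ ((1/4:ℝ)-1) * gf d j' y)) := by
      filter_upwards [hU] with y hy
      exact hGrad_radial d f y hy
        (hf1 _ (Real.rpow_pos_of_pos hy _)) j'
    -- derivative of the explicit formula
    have h1 : HasFDerivAt (fun y => deriv f (hGauge d y))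
        (deriv (deriv f) (hGauge d x) • dRho d x) x :=
      hf2.comp_hasFDerivAt x (hasFDerivAt_rho d x hx)
    have h2 : HasFDerivAt (fun y => Nf d y ^ ((1/4:ℝ)-1))
        ((((1/4:ℝ)-1) * Nf d x ^ ((1/4:ℝ)-1-1)) • dN d x) x :=
      (Real.hasDerivAt_rpow_const (x := Nf d x) (p := (1/4:ℝ)-1)
        (Or.inl hx.ne')).comp_hasFDerivAt x (hasFDerivAt_Nf d x)
    have h3 := hasFDerivAt_gf d j' x
    have h4 := h2.fun_mul h3
    have h5 := h1.fun_mul h4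
    rw [heve.fderiv_eq, h5.fderiv]
    simp only [ContinuousLinearMap.add_apply, ContinuousLinearMap.smul_apply, smul_eq_mul,
      dRho_heis, dN_heis, dG_heis]
    ring
  show (fderiv ℝ (fun y => hGrad d (fun v => f (hGauge d v)) y j) x (heisVF d i x)
      + fderiv ℝ (fun y => hGrad d (fun v => f (hGauge d v)) y i) x (heisVF d j x)) / 2 = _
  rw [key i j, key j i]
  have heps := eps_antisymm d i j
  have hgi : gf d i x = sf d x * x (Fin.castSucc i) + tf d x * zf d i x := rfl
  by_cases hij : i = j
  · subst hij
    have h0 : eps d i i = 0 := by linarith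
    simp only [if_true, eq_self_iff_true, h0]
    ring
  · rw [if_neg hij, if_neg (Ne.symm hij), if_neg hij]
    have : eps d j i = - eps d i j := by linarith [eps_antisymm d i j]
    rw [this]
    ring
lemma sum_gf_sq (x : Fin (2*d+1) → ℝ) (hd : 1 ≤ d) :
    ∑ i : Fin (2*d), (gf d i x)^2 = sf d x * Nf d x := by
  have e : ∀ i : Fin (2*d), (gf d i x)^2
      = sf d x^2 * (x (Fin.castSucc i))^2
        + (2*(sf d x * tf d x)) * (x (Fin.castSucc i) * zf d i x)
        + tf d x^2 * (zf d i x)^2 := by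
    intro i
    have : gf d i x = sf d x * x (Fin.castSucc i) + tf d x * zf d i x := rfl
    rw [this]; ring
  rw [Finset.sum_congr rfl fun i _ => e i, Finset.sum_add_distrib, Finset.sum_add_distrib,
    ← Finset.mul_sum, ← Finset.mul_sum, ← Finset.mul_sum, sum_zf_sq, sum_w_zf d x hd]
  have : ∑ i : Fin (2*d), x (Fin.castSucc i) ^ 2 = sf d x := rfl
  rw [this]
  unfold Nf
  ring

lemma hGradSq_gauge (x : Fin (2*d+1) → ℝ) (hx : 0 < Nf d x) (hd : 1 ≤ d) :
    hGradSq d (hGauge d) x = sf d x * Nf d x * (Nf d x ^ ((1/4:ℝ)-1))^2 := by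
  unfold hGradSq
  have hgrad : ∀ i, hGrad d (hGauge d) x i = Nf d x ^ ((1/4:ℝ)-1) * gf d i x := by
    intro i
    unfold hGrad
    rw [(hasFDerivAt_rho d x hx).fderiv, dRho_heis]
  rw [Finset.sum_congr rfl fun i _ => by rw [hgrad i, mul_pow]]
  rw [← Finset.mul_sum, sum_gf_sq d x hd]
  ring

end HeisAux

end HeisProofAux

/-- the eigenvalues (with multiplicity) of the symmetrized horizontal Hessian
of a radial function `f(ρ)` are `f''(ρ)|Dρ|²`, `3f'(ρ)|Dρ|²/ρ` (each simple) and
`f'(ρ)|Dρ|²/ρ` with multiplicity `2d−2`. -/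
theorem hHess_radial_eigenvalues (d : ℕ) (hd : 1 ≤ d) (f : ℝ → ℝ)
    (hf : ContDiffOn ℝ 2 f (Set.Ioi 0))
    (x : Fin (2*d+1) → ℝ) (hx : 0 < hGauge d x) :
    (Finset.univ.val.map
        (hHess_herm d (fun y => f (hGauge d y)) x).eigenvalues : Multiset ℝ) =
      deriv (deriv f) (hGauge d x) * hGradSq d (hGauge d) x ::ₘ
      3 * deriv f (hGauge d x) * hGradSq d (hGauge d) x / hGauge d x ::ₘ
      Multiset.replicate (2*d - 2)
        (deriv f (hGauge d x) * hGradSq d (hGauge d) x / hGauge d x) := by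
  classical
  have hNx : 0 < HeisAux.Nf d x := by
    rcases lt_or_eq_of_le (show (0:ℝ) ≤ HeisAux.Nf d x by
      unfold HeisAux.Nf; positivity) with h | h
    · exact h
    · exfalso
      rw [HeisAux.hGauge_eq, ← h, Real.zero_rpow (by norm_num)] at hx
      exact lt_irrefl 0 hx
  have hf1 : ∀ r : ℝ, 0 < r → HasDerivAt f (deriv f r) r := by
    intro r hr
    exact ((hf.contDiffAt (isOpen_Ioi.mem_nhds hr)).differentiableAt
      (by norm_num)).hasDerivAt
  have hf2 : HasDerivAt (deriv f) (deriv (deriv f) (hGauge d x)) (hGauge d x) := by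
    have hd1 : ContDiffOn ℝ 1 (deriv f) (Set.Ioi 0) :=
      hf.deriv_of_isOpen isOpen_Ioi (by norm_num)
    exact ((hd1.contDiffAt (isOpen_Ioi.mem_nhds hx)).differentiableAt
      (by norm_num)).hasDerivAt
  have hmain := eigen_multiset_of d hd (hHess d (fun y => f (hGauge d y)) x)
    (hHess_herm d _ x) (fun i => x (Fin.castSucc i)) (fun i => HeisAux.zf d i x)
    (fun i => HeisAux.gf d i x)
    (deriv (deriv f) (hGauge d x) * (HeisAux.Nf d x ^ ((1/4:ℝ)-1))^2
      + 4*((1/4:ℝ)-1) * deriv f (hGauge d x) * HeisAux.Nf d x ^ ((1/4:ℝ)-1-1))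
    (2 * deriv f (hGauge d x) * HeisAux.Nf d x ^ ((1/4:ℝ)-1))
    (deriv f (hGauge d x) * HeisAux.sf d x * HeisAux.Nf d x ^ ((1/4:ℝ)-1))
    (HeisAux.sf d x) (HeisAux.tf d x) (HeisAux.Nf d x)
    (fun i => rfl) rfl (HeisAux.sum_zf_sq d x) (HeisAux.sum_w_zf d x hd) rfl
    (fun i j => HeisAux.hHess_radial_entry d f x hNx hf1 hf2 i j)
  rw [HeisAux.hGradSq_gauge d x hNx hd, hmain]
  -- rpow bookkeeping
  have hQN : HeisAux.Nf d x ^ ((1/4:ℝ)-1-1) * HeisAux.Nf d x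
      = HeisAux.Nf d x ^ ((1/4:ℝ)-1) := by
    rw [← Real.rpow_add_one hNx.ne' ((1/4:ℝ)-1-1)]
    norm_num
  have hPN : HeisAux.Nf d x ^ ((1/4:ℝ)-1) * HeisAux.Nf d x
      = HeisAux.Nf d x ^ (1/4:ℝ) := by
    rw [← Real.rpow_add_one hNx.ne' ((1/4:ℝ)-1)]
    norm_num
  have hρN : hGauge d x = HeisAux.Nf d x ^ (1/4:ℝ) := HeisAux.hGauge_eq d x
  have hRpos : (0:ℝ) < HeisAux.Nf d x ^ (1/4:ℝ) := Real.rpow_pos_of_pos hNx _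
  have hPg : HeisAux.Nf d x ^ ((1/4:ℝ)-1) * HeisAux.Nf d x = hGauge d x :=
    hPN.trans hρN.symm
  have e1 : deriv f (hGauge d x) * HeisAux.sf d x * HeisAux.Nf d x ^ ((1/4:ℝ)-1)
      + HeisAux.sf d x * (2 * deriv f (hGauge d x) * HeisAux.Nf d x ^ ((1/4:ℝ)-1))
      + HeisAux.sf d x * (deriv (deriv f) (hGauge d x) * (HeisAux.Nf d x ^ ((1/4:ℝ)-1))^2
          + 4*((1/4:ℝ)-1) * deriv f (hGauge d x) * HeisAux.Nf d x ^ ((1/4:ℝ)-1-1))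
        * HeisAux.Nf d x
      = deriv (deriv f) (hGauge d x)
        * (HeisAux.sf d x * HeisAux.Nf d x * (HeisAux.Nf d x ^ ((1/4:ℝ)-1))^2) := by
    linear_combination (-3 * deriv f (hGauge d x) * HeisAux.sf d x) * hQN
  have e2 : deriv f (hGauge d x) * HeisAux.sf d x * HeisAux.Nf d x ^ ((1/4:ℝ)-1)
      + HeisAux.sf d x * (2 * deriv f (hGauge d x) * HeisAux.Nf d x ^ ((1/4:ℝ)-1))
      = 3 * deriv f (hGauge d x)
        * (HeisAux.sf d x * HeisAux.Nf d x * (HeisAux.Nf d x ^ ((1/4:ℝ)-1))^2)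
        / hGauge d x := by
    rw [eq_div_iff hx.ne']
    linear_combination (-3 * deriv f (hGauge d x) * HeisAux.sf d x
      * HeisAux.Nf d x ^ ((1/4:ℝ)-1)) * hPg
  have e3 : deriv f (hGauge d x) * HeisAux.sf d x * HeisAux.Nf d x ^ ((1/4:ℝ)-1)
      = deriv f (hGauge d x)
        * (HeisAux.sf d x * HeisAux.Nf d x * (HeisAux.Nf d x ^ ((1/4:ℝ)-1))^2)
        / hGauge d x := by
    rw [eq_div_iff hx.ne']
    linear_combination (- deriv f (hGauge d x) * HeisAux.sf d x
      * HeisAux.Nf d x ^ ((1/4:ℝ)-1)) * hPg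
  rw [e1, e2, e3]
end

section
/- Let Q = 2d+2 and β = Λ(Q−1)/λ + 1 with 0 < λ ≤ Λ. Then β ≥ 4, and the radial function Φ(x) = C_1 ρ(x)^{2−β} + C_2 (C_1 ≥ 0) is a classical solution of M^-_{λ,Λ}(D^2_{H^d}Φ) = 0 on R^{2d+1} \ {0}; moreover r ↦ C_1 r^{2−β} + C_2 is convex and decreasing on (0,∞) when C_1 > 0. -/
open Matrix MeasureTheory Real Set

section spectral
variable {n : ℕ} {M : Matrix (Fin n) (Fin n) ℝ}

lemma trace_eq_sum_eig (hM : M.IsHermitian) : M.trace = ∑ i, hM.eigenvalues i := by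
  nth_rewrite 1 [hM.spectral_theorem]
  rw [Unitary.conjStarAlgAut_apply]
  rw [Matrix.trace_mul_cycle]
  rw [(Matrix.mem_unitaryGroup_iff').mp (hM.eigenvectorUnitary).2]
  simp [Matrix.trace_diagonal]

lemma trace_sq_eq_sum_eig_sq (hM : M.IsHermitian) :
    (M * M).trace = ∑ i, hM.eigenvalues i ^ 2 := by
  set U : Matrix (Fin n) (Fin n) ℝ := (hM.eigenvectorUnitary : Matrix (Fin n) (Fin n) ℝ) with hUdef
  set D : Matrix (Fin n) (Fin n) ℝ := diagonal (RCLike.ofReal ∘ hM.eigenvalues) with hDdef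
  have hU : star U * U = 1 := (Matrix.mem_unitaryGroup_iff').mp (hM.eigenvectorUnitary).2
  have h : M = U * D * star U := hM.spectral_theorem
  have : M * M = U * (D * D) * star U := by
    rw [h]
    calc (U * D * star U) * (U * D * star U) = U * D * (star U * U) * D * star U := by
          noncomm_ring
    _ = U * (D * D) * star U := by rw [hU]; noncomm_ring
  rw [this, Matrix.trace_mul_cycle, ← Matrix.mul_assoc, hU, Matrix.one_mul]
  simp [hDdef, diagonal_mul_diagonal, trace_diagonal, pow_two]

lemma eig_cubic (hM : M.IsHermitian) (a b c : ℝ)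
    (h : (M - a • 1) * ((M - b • 1) * (M - c • 1)) = 0) (i : Fin n) :
    (hM.eigenvalues i - a) * ((hM.eigenvalues i - b) * (hM.eigenvalues i - c)) = 0 := by
  set v : Fin n → ℝ := ⇑(hM.eigenvectorBasis i) with hv
  set e : ℝ := hM.eigenvalues i with he
  have hMv : M *ᵥ v = e • v := hM.mulVec_eigenvectorBasis i
  have hvne : v ≠ 0 := by
    have := hM.eigenvectorBasis.orthonormal.ne_zero i
    intro hcontra
    apply this
    ext k
    exact congrFun hcontra k
  have step : ∀ (s : ℝ) (u : Fin n → ℝ) (μ : ℝ), M *ᵥ u = μ • u →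
      (M - s • 1) *ᵥ u = (μ - s) • u := by
    intro s u μ hu
    rw [Matrix.sub_mulVec, hu, Matrix.smul_mulVec, Matrix.one_mulVec, sub_smul]
  have h1 : (M - c • 1) *ᵥ v = (e - c) • v := step c v e hMv
  have h2 : (M - b • 1) *ᵥ ((e - c) • v) = ((e - b) * (e - c)) • v := by
    rw [Matrix.mulVec_smul, step b v e hMv, smul_smul, mul_comm]
  have h3 : (M - a • 1) *ᵥ (((e - b) * (e - c)) • v) = ((e - a) * ((e - b) * (e - c))) • v := by
    rw [Matrix.mulVec_smul, step a v e hMv, smul_smul]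
    ring_nf
  have : ((M - a • 1) * ((M - b • 1) * (M - c • 1))) *ᵥ v
      = ((e - a) * ((e - b) * (e - c))) • v := by
    rw [← Matrix.mulVec_mulVec, ← Matrix.mulVec_mulVec, h1, h2, h3]
  rw [h] at this
  have : ((e - a) * ((e - b) * (e - c))) • v = 0 := by rw [← this, Matrix.zero_mulVec]
  rcases smul_eq_zero.mp this with h' | h'
  · exact h'
  · exact absurd h' hvne
end spectral

section rank2
variable {n : ℕ}

lemma vmv_mul_vmv (q p r s : Fin n → ℝ) :
    Matrix.vecMulVec q p * Matrix.vecMulVec r s = (p ⬝ᵥ r) • Matrix.vecMulVec q s := by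
  ext i j
  simp only [Matrix.mul_apply, Matrix.vecMulVec_apply, Matrix.smul_apply, dotProduct,
    smul_eq_mul, Finset.mul_sum]
  rw [Finset.sum_mul]
  congr 1; ext k; ring

lemma trace_vmv (q p : Fin n → ℝ) : (Matrix.vecMulVec q p).trace = q ⬝ᵥ p := by
  simp [Matrix.trace, Matrix.diag, Matrix.vecMulVec_apply, dotProduct]

/-- Master lemma: eigenvalue sum for `K•1 + k1•qqᵀ + k2•ppᵀ`. -/
lemma sum_g_eig {M : Matrix (Fin n) (Fin n) ℝ} (hM : M.IsHermitian)
    (q p : Fin n → ℝ) (K k1 k2 Nm : ℝ)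
    (hq : q ⬝ᵥ q = Nm) (hp : p ⬝ᵥ p = Nm) (hqp : q ⬝ᵥ p = 0) (hpq : p ⬝ᵥ q = 0)
    (hMeq : M = K • (1 : Matrix (Fin n) (Fin n) ℝ)
      + k1 • Matrix.vecMulVec q q + k2 • Matrix.vecMulVec p p)
    (g : ℝ → ℝ) (A B C : ℝ)
    (hga : g (K + k1 * Nm) = A * (K + k1*Nm)^2 + B * (K + k1*Nm) + C)
    (hgb : g (K + k2 * Nm) = A * (K + k2*Nm)^2 + B * (K + k2*Nm) + C)
    (hgc : g K = A * K^2 + B * K + C) :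
    ∑ i, g (hM.eigenvalues i)
      = g (K + k1*Nm) + g (K + k2*Nm) + ((n : ℝ) - 2) * g K := by
  set a := K + k1 * Nm with ha
  set b := K + k2 * Nm with hb
  set Q := Matrix.vecMulVec q q with hQ
  set P := Matrix.vecMulVec p p with hP
  have hQQ : Q * Q = Nm • Q := by rw [hQ, vmv_mul_vmv, hq]
  have hPP : P * P = Nm • P := by rw [hP, vmv_mul_vmv, hp]
  have hQP : Q * P = 0 := by rw [hQ, hP, vmv_mul_vmv, hqp, zero_smul]
  have hPQ : P * Q = 0 := by rw [hQ, hP, vmv_mul_vmv, hpq, zero_smul]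
  -- annihilating polynomial
  have hann : (M - a • 1) * ((M - b • 1) * (M - K • 1)) = 0 := by
    have e1 : M - K • 1 = k1 • Q + k2 • P := by rw [hMeq]; abel
    have e2 : M - a • 1 = k1 • Q + k2 • P - (k1 * Nm) • 1 := by
      rw [hMeq, ha]; rw [add_smul]; abel
    have e3 : M - b • 1 = k1 • Q + k2 • P - (k2 * Nm) • 1 := by
      rw [hMeq, hb]; rw [add_smul]; abel
    rw [e1, e2, e3]
    have inner : (k1 • Q + k2 • P - (k2 * Nm) • 1) * (k1 • Q + k2 • P)
        = (k1 * (k1 - k2) * Nm) • Q := by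
      simp only [sub_mul, add_mul, mul_add, smul_mul_assoc, mul_smul_comm, one_mul,
        hQQ, hPP, hQP, hPQ, smul_smul, smul_zero]
      module
    rw [inner]
    simp only [sub_mul, add_mul, smul_mul_assoc, mul_smul_comm, one_mul,
      hQQ, hQP, hPQ, smul_smul, smul_zero]
    module
  -- traces
  have htr : M.trace = a + b + ((n : ℝ) - 2) * K := by
    rw [hMeq]
    simp only [hQ, hP, Matrix.trace_add, Matrix.trace_smul, Matrix.trace_one, trace_vmv, hq, hp,
      smul_eq_mul, ha, hb, Fintype.card_fin]
    push_cast
    ring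
  have htr2 : (M * M).trace = a^2 + b^2 + ((n : ℝ) - 2) * K^2 := by
    have : M * M = (K*K) • (1 : Matrix (Fin n) (Fin n) ℝ)
        + (2*K*k1 + k1*k1*Nm) • Q + (2*K*k2 + k2*k2*Nm) • P := by
      rw [hMeq]
      simp only [add_mul, mul_add, smul_mul_assoc, mul_smul_comm, one_mul, mul_one,
        hQQ, hPP, hQP, hPQ, smul_smul, smul_zero]
      module
    rw [this]
    simp only [hQ, hP, Matrix.trace_add, Matrix.trace_smul, Matrix.trace_one, trace_vmv, hq, hp,
      smul_eq_mul, ha, hb, Fintype.card_fin]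
    push_cast
    ring
  -- each eigenvalue is a root
  have hroot : ∀ i, hM.eigenvalues i = a ∨ hM.eigenvalues i = b ∨ hM.eigenvalues i = K := by
    intro i
    have := eig_cubic hM a b K hann i
    rcases mul_eq_zero.mp this with h' | h'
    · exact Or.inl (by linarith [sub_eq_zero.mp h'])
    · rcases mul_eq_zero.mp h' with h'' | h''
      · exact Or.inr (Or.inl (sub_eq_zero.mp h''))
      · exact Or.inr (Or.inr (sub_eq_zero.mp h''))
  have hquad : ∀ i, g (hM.eigenvalues i)
      = A * (hM.eigenvalues i)^2 + B * (hM.eigenvalues i) + C := by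
    intro i
    rcases hroot i with h' | h' | h' <;> rw [h']
    · exact hga
    · exact hgb
    · exact hgc
  calc ∑ i, g (hM.eigenvalues i)
      = A * (∑ i, hM.eigenvalues i ^ 2) + B * (∑ i, hM.eigenvalues i) + (n : ℝ) * C := by
        rw [Finset.sum_congr rfl (fun i _ => hquad i)]
        rw [Finset.sum_add_distrib, Finset.sum_add_distrib, ← Finset.mul_sum, ← Finset.mul_sum,
          Finset.sum_const]
        simp [mul_comm]
    _ = A * (a^2 + b^2 + ((n:ℝ)-2)*K^2) + B * (a + b + ((n:ℝ)-2)*K) + (n:ℝ) * C := by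
        rw [← trace_sq_eq_sum_eig_sq hM, ← trace_eq_sum_eig hM, htr, htr2]
    _ = g a + g b + ((n : ℝ) - 2) * g K := by rw [hga, hgb, hgc]; ring
end rank2

noncomputable section FSBaux

def sF (d : ℕ) (x : Fin (2*d+1) → ℝ) : ℝ := ∑ i : Fin (2*d), x (Fin.castSucc i) ^ 2
def tF (d : ℕ) (x : Fin (2*d+1) → ℝ) : ℝ := x (Fin.last (2*d))
def wF (d : ℕ) (x : Fin (2*d+1) → ℝ) : ℝ := sF d x ^ 2 + tF d x ^ 2
def sig (d : ℕ) (i : Fin (2*d)) : Fin (2*d) :=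
  if h : (i : ℕ) < d then ⟨(i:ℕ) + d, by omega⟩ else ⟨(i:ℕ) - d, by omega⟩
def eps (d : ℕ) (i : Fin (2*d)) : ℝ := if (i : ℕ) < d then 1 else -1
def zF (d : ℕ) (x : Fin (2*d+1) → ℝ) (i : Fin (2*d)) : ℝ :=
  eps d i * x (Fin.castSucc (sig d i))
def vF (d : ℕ) (x : Fin (2*d+1) → ℝ) (i : Fin (2*d)) : ℝ :=
  sF d x * x (Fin.castSucc i) + tF d x * zF d x i
def pF (d : ℕ) (x : Fin (2*d+1) → ℝ) (i : Fin (2*d)) : ℝ :=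
  tF d x * x (Fin.castSucc i) - sF d x * zF d x i

lemma sig_invol (d : ℕ) : Function.Involutive (sig d) := by
  intro i
  have hi := i.isLt
  unfold sig
  by_cases h : (i : ℕ) < d
  · have h2 : ¬ ((⟨(i:ℕ)+d, by omega⟩ : Fin (2*d)) : ℕ) < d := by
      simp only [Fin.val_mk]; omega
    rw [dif_pos h, dif_neg h2]
    ext
    simp only [Fin.val_mk]
    omega
  · have h2 : ((⟨(i:ℕ)-d, by omega⟩ : Fin (2*d)) : ℕ) < d := by
      simp only [Fin.val_mk]; omega
    rw [dif_neg h, dif_pos h2]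
    ext
    simp only [Fin.val_mk]
    omega

lemma eps_sig (d : ℕ) (i : Fin (2*d)) : eps d (sig d i) = - eps d i := by
  have hi := i.isLt
  unfold eps sig
  by_cases h : (i : ℕ) < d
  · have h2 : ¬ ((⟨(i:ℕ)+d, by omega⟩ : Fin (2*d)) : ℕ) < d := by
      simp only [Fin.val_mk]; omega
    rw [dif_pos h, if_pos h, if_neg h2]
  · have h2 : ((⟨(i:ℕ)-d, by omega⟩ : Fin (2*d)) : ℕ) < d := by
      simp only [Fin.val_mk]; omega
    rw [dif_neg h, if_neg h, if_pos h2]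
    norm_num

lemma eps_sq (d : ℕ) (i : Fin (2*d)) : eps d i * eps d i = 1 := by
  unfold eps; split <;> norm_num

def sigPerm (d : ℕ) : Equiv.Perm (Fin (2*d)) := (sig_invol d).toPerm

lemma sum_z_sq (d : ℕ) (x : Fin (2*d+1) → ℝ) : ∑ i, zF d x i ^ 2 = sF d x := by
  have h1 : ∀ i, zF d x i ^ 2 = x (Fin.castSucc (sig d i)) ^ 2 := by
    intro i
    unfold zF
    rw [mul_pow, pow_two (eps d i), eps_sq, one_mul]
  rw [Finset.sum_congr rfl (fun i _ => h1 i)]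
  have := Equiv.sum_comp (sigPerm d) (fun i => x (Fin.castSucc i) ^ 2)
  unfold sF
  rw [← this]
  rfl

lemma sum_xz (d : ℕ) (x : Fin (2*d+1) → ℝ) : ∑ i, x (Fin.castSucc i) * zF d x i = 0 := by
  have key := Equiv.sum_comp (sigPerm d) (fun i => x (Fin.castSucc i) * zF d x i)
  have h1 : ∀ i, x (Fin.castSucc (sigPerm d i)) * zF d x (sigPerm d i)
      = - (x (Fin.castSucc i) * zF d x i) := by
    intro i
    have hs : (sigPerm d i) = sig d i := rfl
    rw [hs]
    unfold zF
    rw [eps_sig, sig_invol d i]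
    ring
  rw [Finset.sum_congr rfl (fun i _ => h1 i), Finset.sum_neg_distrib] at key
  linarith [key]

lemma dot_vv (d : ℕ) (x : Fin (2*d+1) → ℝ) : vF d x ⬝ᵥ vF d x = sF d x * wF d x := by
  unfold dotProduct
  have h1 : ∀ i, vF d x i * vF d x i
      = sF d x ^2 * (x (Fin.castSucc i))^2 + (2 * sF d x * tF d x) * (x (Fin.castSucc i) * zF d x i)
        + tF d x ^2 * (zF d x i)^2 := by intro i; unfold vF; ring
  rw [Finset.sum_congr rfl (fun i _ => h1 i)]
  rw [Finset.sum_add_distrib, Finset.sum_add_distrib, ← Finset.mul_sum, ← Finset.mul_sum,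
    ← Finset.mul_sum, sum_z_sq, sum_xz]
  unfold wF sF
  ring

lemma dot_pp (d : ℕ) (x : Fin (2*d+1) → ℝ) : pF d x ⬝ᵥ pF d x = sF d x * wF d x := by
  unfold dotProduct
  have h1 : ∀ i, pF d x i * pF d x i
      = tF d x ^2 * (x (Fin.castSucc i))^2 - (2 * sF d x * tF d x) * (x (Fin.castSucc i) * zF d x i)
        + sF d x ^2 * (zF d x i)^2 := by intro i; unfold pF; ring
  rw [Finset.sum_congr rfl (fun i _ => h1 i)]
  rw [Finset.sum_add_distrib, Finset.sum_sub_distrib, ← Finset.mul_sum, ← Finset.mul_sum,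
    ← Finset.mul_sum, sum_z_sq, sum_xz]
  unfold wF sF
  ring

lemma dot_vp (d : ℕ) (x : Fin (2*d+1) → ℝ) : vF d x ⬝ᵥ pF d x = 0 := by
  unfold dotProduct
  have h1 : ∀ i, vF d x i * pF d x i
      = sF d x * tF d x * (x (Fin.castSucc i))^2 + (tF d x^2 - sF d x^2) * (x (Fin.castSucc i) * zF d x i)
        - sF d x * tF d x * (zF d x i)^2 := by intro i; unfold vF pF; ring
  rw [Finset.sum_congr rfl (fun i _ => h1 i)]
  rw [Finset.sum_sub_distrib, Finset.sum_add_distrib, ← Finset.mul_sum, ← Finset.mul_sum,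
    ← Finset.mul_sum, sum_z_sq, sum_xz]
  unfold sF
  ring

lemma dot_pv (d : ℕ) (x : Fin (2*d+1) → ℝ) : pF d x ⬝ᵥ vF d x = 0 := by
  rw [show pF d x ⬝ᵥ vF d x = vF d x ⬝ᵥ pF d x from dotProduct_comm _ _, dot_vp]

lemma sF_nonneg (d : ℕ) (x : Fin (2*d+1) → ℝ) : 0 ≤ sF d x :=
  Finset.sum_nonneg fun i _ => sq_nonneg _

lemma wF_pos (d : ℕ) (x : Fin (2*d+1) → ℝ) (hx : x ≠ 0) : 0 < wF d x := by
  rcases lt_or_eq_of_le (show (0:ℝ) ≤ wF d x by unfold wF; positivity) with h | h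
  · exact h
  · exfalso
    apply hx
    unfold wF at h
    have hs : sF d x = 0 := by
      nlinarith [sF_nonneg d x, sq_nonneg (tF d x), sq_nonneg (sF d x)]
    have ht : tF d x = 0 := by
      nlinarith [sF_nonneg d x, sq_nonneg (tF d x), sq_nonneg (sF d x)]
    have hc : ∀ i : Fin (2*d), x (Fin.castSucc i) = 0 := by
      intro i
      unfold sF at hs
      have h1 : ∀ j ∈ Finset.univ, x (Fin.castSucc j) ^ 2 = 0 :=
        (Finset.sum_eq_zero_iff_of_nonneg
          (fun j _ => sq_nonneg (x (Fin.castSucc j)))).mp hs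
      exact pow_eq_zero_iff (by norm_num) |>.mp (h1 i (Finset.mem_univ i))
    funext k
    refine Fin.lastCases ?_ ?_ k
    · exact ht
    · exact hc

end FSBaux

section calc1
variable {d : ℕ}

lemma heisVF_eq (d : ℕ) (i : Fin (2*d)) (x : Fin (2*d+1) → ℝ) :
    heisVF d i x = (Pi.single (Fin.castSucc i) 1 : Fin (2*d+1) → ℝ)
      + (2 * zF d x i) • (Pi.single (Fin.last (2*d)) 1 : Fin (2*d+1) → ℝ) := by
  have hi := i.isLt
  unfold heisVF zF eps sig
  by_cases h : (i:ℕ) < d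
  · rw [dif_pos h, dif_pos h, if_pos h]
    have hcast : Fin.castSucc (⟨(i:ℕ)+d, by omega⟩ : Fin (2*d)) = (⟨(i:ℕ)+d, by omega⟩ : Fin (2*d+1)) := by
      ext; simp
    rw [hcast, one_mul]
  · rw [dif_neg h, dif_neg h, if_neg h]
    have hcast : Fin.castSucc (⟨(i:ℕ)-d, by omega⟩ : Fin (2*d)) = (⟨(i:ℕ)-d, by omega⟩ : Fin (2*d+1)) := by
      ext; simp
    rw [hcast, sub_eq_add_neg, ← neg_smul]
    congr 1
    ring
lemma cs_ne_last (i : Fin (2*d)) : Fin.castSucc i ≠ Fin.last (2*d) :=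
  Fin.ne_of_lt (Fin.castSucc_lt_last i)

lemma heisVF_app_cs (i j : Fin (2*d)) (x : Fin (2*d+1) → ℝ) :
    heisVF d i x (Fin.castSucc j) = if j = i then 1 else 0 := by
  rw [heisVF_eq]
  simp only [Pi.add_apply, Pi.smul_apply, smul_eq_mul]
  rw [Pi.single_apply, Pi.single_apply]
  rw [if_neg (cs_ne_last j)]
  simp [Fin.castSucc_inj]

lemma heisVF_app_last (i : Fin (2*d)) (x : Fin (2*d+1) → ℝ) :
    heisVF d i x (Fin.last (2*d)) = 2 * zF d x i := by
  rw [heisVF_eq]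
  simp only [Pi.add_apply, Pi.smul_apply, smul_eq_mul]
  rw [Pi.single_apply, Pi.single_apply]
  rw [if_neg (Ne.symm (cs_ne_last i))]
  simp
end calc1

noncomputable section calc2
open ContinuousLinearMap

def PRJ (d : ℕ) (k : Fin (2*d+1)) : (Fin (2*d+1) → ℝ) →L[ℝ] ℝ :=
  ContinuousLinearMap.proj k

def DS (d : ℕ) (x : Fin (2*d+1) → ℝ) : (Fin (2*d+1) → ℝ) →L[ℝ] ℝ :=
  ∑ i : Fin (2*d), (2 * x (Fin.castSucc i)) • PRJ d (Fin.castSucc i)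

def DW (d : ℕ) (x : Fin (2*d+1) → ℝ) : (Fin (2*d+1) → ℝ) →L[ℝ] ℝ :=
  (2 * sF d x) • DS d x + (2 * tF d x) • PRJ d (Fin.last (2*d))

def DV (d : ℕ) (x : Fin (2*d+1) → ℝ) (j : Fin (2*d)) : (Fin (2*d+1) → ℝ) →L[ℝ] ℝ :=
  (x (Fin.castSucc j)) • DS d x + sF d x • PRJ d (Fin.castSucc j)
    + (zF d x j) • PRJ d (Fin.last (2*d))
    + (tF d x * eps d j) • PRJ d (Fin.castSucc (sig d j))

def GF (d : ℕ) (C1 γ : ℝ) (x : Fin (2*d+1) → ℝ) (j : Fin (2*d)) : ℝ :=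
  4 * C1 * γ * wF d x ^ (γ - 1) * vF d x j

def DG (d : ℕ) (C1 γ : ℝ) (x : Fin (2*d+1) → ℝ) (j : Fin (2*d)) :
    (Fin (2*d+1) → ℝ) →L[ℝ] ℝ :=
  (4 * C1 * γ) • ((vF d x j * ((γ - 1) * wF d x ^ (γ - 2))) • DW d x
    + (wF d x ^ (γ - 1)) • DV d x j)

def DU (d : ℕ) (C1 γ : ℝ) (x : Fin (2*d+1) → ℝ) : (Fin (2*d+1) → ℝ) →L[ℝ] ℝ :=
  (C1 * (γ * wF d x ^ (γ - 1))) • DW d x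

variable {d : ℕ} {x : Fin (2*d+1) → ℝ} {C1 C2 γ : ℝ}

lemma hasF_coord (k : Fin (2*d+1)) : HasFDerivAt (fun y : Fin (2*d+1) → ℝ => y k) (PRJ d k) x :=
  (ContinuousLinearMap.proj k : (Fin (2*d+1) → ℝ) →L[ℝ] ℝ).hasFDerivAt

lemma hasF_s : HasFDerivAt (sF d) (DS d x) x := by
  have h : HasFDerivAt (sF d)
      (∑ i : Fin (2*d), ((x (Fin.castSucc i)) • PRJ d (Fin.castSucc i)
        + (x (Fin.castSucc i)) • PRJ d (Fin.castSucc i))) x := by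
    unfold sF
    simp only [pow_two]
    exact HasFDerivAt.fun_sum fun i _ => (hasF_coord (Fin.castSucc i)).mul (hasF_coord (Fin.castSucc i))
  convert h using 1
  unfold DS
  ext h'
  simp only [ContinuousLinearMap.sum_apply, ContinuousLinearMap.add_apply,
    ContinuousLinearMap.smul_apply, smul_eq_mul]
  exact Finset.sum_congr rfl fun i _ => by ring

lemma hasF_t : HasFDerivAt (tF d) (PRJ d (Fin.last (2*d))) x := hasF_coord _

lemma hasF_w : HasFDerivAt (wF d) (DW d x) x := by
  have h := (hasF_s (d := d) (x := x)).mul (hasF_s (d := d) (x := x))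
  have h2 := (hasF_t (d := d) (x := x)).mul (hasF_t (d := d) (x := x))
  have h3 := h.add h2
  have : wF d = fun y => sF d y * sF d y + tF d y * tF d y := by
    funext y; unfold wF; ring
  rw [this]
  refine h3.congr_fderiv ?_
  unfold DW
  ext h'
  simp only [ContinuousLinearMap.add_apply, ContinuousLinearMap.smul_apply, smul_eq_mul]
  ring

lemma hasF_v (j : Fin (2*d)) : HasFDerivAt (fun y => vF d y j) (DV d x j) x := by
  have h1 := (hasF_s (d := d) (x := x)).mul (hasF_coord (Fin.castSucc j))
  have h2 := (hasF_t (d := d) (x := x)).mul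
    ((hasF_coord (d := d) (x := x) (Fin.castSucc (sig d j))).const_mul (eps d j))
  have h3 := h1.add h2
  have : (fun y => vF d y j)
      = fun y => sF d y * y (Fin.castSucc j) + tF d y * (eps d j * y (Fin.castSucc (sig d j))) := by
    funext y; unfold vF zF; ring
  rw [this]
  refine h3.congr_fderiv ?_
  unfold DV
  ext h'
  simp only [ContinuousLinearMap.add_apply, ContinuousLinearMap.smul_apply, smul_eq_mul]
  unfold zF
  ring

lemma hasF_u (hw : 0 < wF d x) :
    HasFDerivAt (fun y => C1 * wF d y ^ γ + C2) (DU d C1 γ x) x := by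
  have hr : HasDerivAt (fun t : ℝ => t ^ γ) (γ * wF d x ^ (γ - 1)) (wF d x) :=
    Real.hasDerivAt_rpow_const (Or.inl hw.ne')
  have hcomp := hr.comp_hasFDerivAt x (hasF_w (d := d) (x := x))
  have h2 := (hcomp.const_mul C1).add_const C2
  refine h2.congr_fderiv ?_
  unfold DU
  rw [smul_smul]

lemma hasF_G (hw : 0 < wF d x) (j : Fin (2*d)) :
    HasFDerivAt (fun y => GF d C1 γ y j) (DG d C1 γ x j) x := by
  have hr : HasDerivAt (fun t : ℝ => t ^ (γ - 1)) ((γ - 1) * wF d x ^ (γ - 1 - 1)) (wF d x) :=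
    Real.hasDerivAt_rpow_const (Or.inl hw.ne')
  have hcomp : HasFDerivAt (fun y => wF d y ^ (γ - 1))
      (((γ - 1) * wF d x ^ (γ - 1 - 1)) • DW d x) x :=
    hr.comp_hasFDerivAt x (hasF_w (d := d) (x := x))
  have h2 := (hcomp.mul (hasF_v (d := d) (x := x) j)).const_mul (4 * C1 * γ)
  have : (fun y => GF d C1 γ y j) = fun y => 4 * C1 * γ * (wF d y ^ (γ - 1) * vF d y j) := by
    funext y; unfold GF; ring
  rw [this]
  refine h2.congr_fderiv ?_
  unfold DG
  ext h'
  simp only [ContinuousLinearMap.add_apply, ContinuousLinearMap.smul_apply, smul_eq_mul]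
  rw [show γ - 1 - 1 = γ - 2 by ring]
  ring

-- evaluation lemmas
lemma DS_app (i : Fin (2*d)) : DS d x (heisVF d i x) = 2 * x (Fin.castSucc i) := by
  unfold DS PRJ
  simp only [ContinuousLinearMap.sum_apply, ContinuousLinearMap.smul_apply,
    ContinuousLinearMap.proj_apply, smul_eq_mul, heisVF_app_cs]
  rw [Finset.sum_eq_single i]
  · simp
  · intro b _ hb; rw [if_neg hb, mul_zero]
  · intro hb; exact absurd (Finset.mem_univ i) hb

lemma PRJ_last_app (i : Fin (2*d)) : PRJ d (Fin.last (2*d)) (heisVF d i x) = 2 * zF d x i := by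
  unfold PRJ
  simp only [ContinuousLinearMap.proj_apply]
  exact heisVF_app_last i x

lemma PRJ_cs_app (j i : Fin (2*d)) :
    PRJ d (Fin.castSucc j) (heisVF d i x) = if i = j then 1 else 0 := by
  unfold PRJ
  simp only [ContinuousLinearMap.proj_apply]
  rw [heisVF_app_cs i j x]
  simp [eq_comm]

lemma DW_app (i : Fin (2*d)) : DW d x (heisVF d i x) = 4 * vF d x i := by
  unfold DW
  simp only [ContinuousLinearMap.add_apply, ContinuousLinearMap.smul_apply, smul_eq_mul,
    DS_app, PRJ_last_app]
  unfold vF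
  ring

lemma DV_app (j i : Fin (2*d)) :
    DV d x j (heisVF d i x)
      = 2 * x (Fin.castSucc i) * x (Fin.castSucc j) + (if i = j then sF d x else 0)
        + 2 * zF d x i * zF d x j
        + tF d x * eps d j * (if i = sig d j then 1 else 0) := by
  unfold DV
  simp only [ContinuousLinearMap.add_apply, ContinuousLinearMap.smul_apply, smul_eq_mul,
    DS_app, PRJ_last_app, PRJ_cs_app]
  have : zF d x j * (2 * zF d x i) = 2 * zF d x i * zF d x j := by ring
  rw [this]
  have hsd : sF d x * (if i = j then (1:ℝ) else 0) = (if i = j then sF d x else 0) := by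
    split_ifs <;> ring
  rw [hsd]
  ring

lemma DU_app (j : Fin (2*d)) : DU d C1 γ x (heisVF d j x) = GF d C1 γ x j := by
  unfold DU GF
  simp only [ContinuousLinearMap.smul_apply, smul_eq_mul, DW_app]
  ring

end calc2

noncomputable section calc3
variable {d : ℕ} {C1 C2 γ : ℝ}

lemma sig_ne (j : Fin (2*d)) : sig d j ≠ j := by
  have hj := j.isLt
  intro h
  have := congrArg Fin.val h
  unfold sig at this
  by_cases hlt : (j:ℕ) < d
  · rw [dif_pos hlt] at this; simp only [Fin.val_mk] at this; omega
  · rw [dif_neg hlt] at this; simp only [Fin.val_mk] at this; omega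

lemma grad_eq (x : Fin (2*d+1) → ℝ) (hx : x ≠ 0) :
    hGrad d (fun y => C1 * wF d y ^ γ + C2) x = GF d C1 γ x := by
  funext j
  unfold hGrad
  rw [(hasF_u (C1 := C1) (C2 := C2) (γ := γ) (wF_pos d x hx)).fderiv]
  exact DU_app j

def NF (d : ℕ) (C1 γ : ℝ) (x : Fin (2*d+1) → ℝ) : Matrix (Fin (2*d)) (Fin (2*d)) ℝ :=
  Matrix.of fun i j => (4*C1*γ) * (4*(γ-1) * wF d x ^ (γ-2) * vF d x i * vF d x j
    + wF d x ^ (γ-1) * ((if i = j then sF d x else 0)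
      + 2 * x (Fin.castSucc i) * x (Fin.castSucc j) + 2 * zF d x i * zF d x j))

lemma fderiv_grad_eq (x : Fin (2*d+1) → ℝ) (hx : x ≠ 0) (i j : Fin (2*d)) :
    fderiv ℝ (fun y => hGrad d (fun y' => C1 * wF d y' ^ γ + C2) y j) x (heisVF d i x)
      = DG d C1 γ x j (heisVF d i x) := by
  have hev : (fun y => hGrad d (fun y' => C1 * wF d y' ^ γ + C2) y j)
      =ᶠ[nhds x] (fun y => GF d C1 γ y j) := by
    filter_upwards [isOpen_compl_singleton.mem_nhds (by simpa using hx)] with y hy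
    have hy' : y ≠ 0 := by simpa using hy
    exact congrFun (grad_eq (C1 := C1) (C2 := C2) (γ := γ) y hy') j
  rw [hev.fderiv_eq, (hasF_G (C1 := C1) (γ := γ) (wF_pos d x hx) j).fderiv]

lemma hess_eq (x : Fin (2*d+1) → ℝ) (hx : x ≠ 0) :
    hHess d (fun y => C1 * wF d y ^ γ + C2) x = NF d C1 γ x := by
  ext i j
  show (fderiv ℝ (fun y => hGrad d _ y j) x (heisVF d i x)
      + fderiv ℝ (fun y => hGrad d _ y i) x (heisVF d j x)) / 2 = _
  rw [fderiv_grad_eq x hx i j, fderiv_grad_eq x hx j i]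
  unfold DG
  simp only [ContinuousLinearMap.add_apply, ContinuousLinearMap.smul_apply, smul_eq_mul,
    DW_app, DV_app]
  unfold NF
  simp only [Matrix.of_apply]
  rcases eq_or_ne i (sig d j) with hs | hs
  · have hs' : j = sig d i := by rw [hs, sig_invol]
    rw [if_pos hs, if_pos hs']
    have hij : i ≠ j := by rw [hs]; exact sig_ne j
    rw [if_neg hij, if_neg (Ne.symm hij)]
    subst hs
    rw [eps_sig]
    ring
  · have hs' : j ≠ sig d i := fun h => hs (by rw [h, sig_invol])
    rw [if_neg hs, if_neg hs']
    rcases eq_or_ne i j with he | he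
    · subst he
      rw [if_pos rfl]
      ring
    · rw [if_neg he, if_neg (Ne.symm he)]
      ring

lemma NF_decomp (x : Fin (2*d+1) → ℝ) (hw : 0 < wF d x) :
    NF d C1 γ x = (4*C1*γ*(sF d x * wF d x ^ (γ-1))) • (1 : Matrix (Fin (2*d)) (Fin (2*d)) ℝ)
      + (4*C1*γ*((4*γ-2) * wF d x ^ (γ-2))) • Matrix.vecMulVec (vF d x) (vF d x)
      + (4*C1*γ*(2 * wF d x ^ (γ-2))) • Matrix.vecMulVec (pF d x) (pF d x) := by
  have hpow : wF d x ^ (γ-1) = wF d x ^ (γ-2) * wF d x := by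
    rw [show γ-1 = (γ-2)+1 by ring, Real.rpow_add_one hw.ne']
  ext i j
  simp only [NF, Matrix.of_apply, Matrix.add_apply, Matrix.smul_apply, Matrix.one_apply,
    Matrix.vecMulVec_apply, smul_eq_mul]
  rw [hpow]
  rcases eq_or_ne i j with he | he
  · subst he
    rw [if_pos rfl, if_pos rfl]
    unfold vF pF wF
    ring
  · rw [if_neg he, if_neg he]
    unfold vF pF wF
    ring

lemma u_rpow_eq (d : ℕ) (C1 C2 β : ℝ) :
    (fun y => C1 * hGauge d y ^ (2-β) + C2) = (fun y => C1 * wF d y ^ ((2-β)/4) + C2) := by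
  funext y
  unfold hGauge wF sF tF
  rw [← Real.rpow_mul (by positivity)]
  rw [show (1/4:ℝ)*(2-β) = (2-β)/4 from by ring]

end calc3

lemma convex_part (C1 C2 β : ℝ) (hC1 : 0 < C1) (hβ4 : 4 ≤ β) :
    ConvexOn ℝ (Set.Ioi 0) (fun r : ℝ => C1 * r ^ (2 - β) + C2) ∧
    StrictAntiOn (fun r : ℝ => C1 * r ^ (2 - β) + C2) (Set.Ioi 0) := by
  set f : ℝ → ℝ := fun r => C1 * r ^ (2 - β) + C2 with hfdef
  have hder : ∀ r : ℝ, 0 < r → HasDerivAt f (C1 * (2-β) * r ^ (2-β-1)) r := by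
    intro r hr
    have h := ((Real.hasDerivAt_rpow_const (x := r) (p := 2-β) (Or.inl hr.ne')).const_mul C1).add_const C2
    refine h.congr_deriv ?_
    ring
  have hcont : ContinuousOn f (Set.Ioi 0) :=
    fun r hr => ((hder r hr).differentiableAt.continuousAt).continuousWithinAt
  have hdiff : DifferentiableOn ℝ f (Set.Ioi 0) :=
    fun r hr => (hder r hr).differentiableAt.differentiableWithinAt
  have hderiv_eq : Set.EqOn (deriv f) (fun r => C1 * (2-β) * r ^ (2-β-1)) (Set.Ioi 0) :=
    fun r hr => (hder r hr).deriv
  have hder2 : ∀ r : ℝ, 0 < r →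
      HasDerivAt (fun r => C1 * (2-β) * r ^ (2-β-1)) (C1 * (2-β) * (2-β-1) * r ^ (2-β-1-1)) r := by
    intro r hr
    have h := (Real.hasDerivAt_rpow_const (x := r) (p := 2-β-1) (Or.inl hr.ne')).const_mul (C1 * (2-β))
    refine h.congr_deriv ?_
    ring
  have hdiff2 : DifferentiableOn ℝ (deriv f) (Set.Ioi 0) := by
    exact DifferentiableOn.congr
      (fun r hr => (hder2 r hr).differentiableAt.differentiableWithinAt) hderiv_eq
  constructor
  · apply convexOn_of_deriv2_nonneg (convex_Ioi 0) hcont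
    · rwa [interior_Ioi]
    · rwa [interior_Ioi]
    · intro r hr
      rw [interior_Ioi] at hr
      have h1 : deriv f =ᶠ[nhds r] (fun r => C1 * (2-β) * r ^ (2-β-1)) := by
        filter_upwards [isOpen_Ioi.mem_nhds hr] with y hy
        exact hderiv_eq hy
      have : deriv^[2] f r = deriv (deriv f) r := rfl
      rw [this, h1.deriv_eq, (hder2 r hr).deriv]
      have hrp : 0 < r ^ (2-β-1-1) := Real.rpow_pos_of_pos hr _
      have h6 : 0 < (2-β)*(2-β-1) := by nlinarith
      nlinarith [mul_pos (mul_pos hC1 h6) hrp]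
  · apply strictAntiOn_of_deriv_neg (convex_Ioi 0) hcont
    intro r hr
    rw [interior_Ioi] at hr
    rw [hderiv_eq hr]
    show C1 * (2-β) * r ^ (2-β-1) < 0
    have hrp : 0 < r ^ (2-β-1) := Real.rpow_pos_of_pos hr _
    nlinarith [mul_pos hC1 hrp]
set_option maxHeartbeats 1000000 in
/-- for `β = Λ(Q−1)/λ + 1`, one has `β ≥ 4`, `Φ(x) = C₁ρ(x)^{2−β} + C₂`
solves `M⁻_{λ,Λ}(D²_{ℍ^d}Φ) = 0` away from the origin, and `r ↦ C₁r^{2−β}+C₂` is convex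
and decreasing on `(0,∞)` when `C₁ > 0`. -/
theorem fundamental_solution_beta (d : ℕ) (hd : 1 ≤ d) (l L C1 C2 : ℝ)
    (hl : 0 < l) (hL : l ≤ L) (hC1 : 0 ≤ C1)
    (β : ℝ) (hβ : β = L * (2*d+1) / l + 1) :
    4 ≤ β ∧
    (∀ x : Fin (2*d+1) → ℝ, x ≠ 0 →
      pucciMinus l L (hHess_herm d (fun y => C1 * hGauge d y ^ (2 - β) + C2) x) = 0) ∧
    (0 < C1 →
      ConvexOn ℝ (Set.Ioi 0) (fun r : ℝ => C1 * r ^ (2 - β) + C2) ∧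
      StrictAntiOn (fun r : ℝ => C1 * r ^ (2 - β) + C2) (Set.Ioi 0)) := by
  have hd1 : (1:ℝ) ≤ (d:ℝ) := by exact_mod_cast hd
  have hβ4 : 4 ≤ β := by
    rw [hβ]
    rw [show (4:ℝ) = 3 + 1 from by norm_num]
    gcongr
    rw [le_div_iff₀ hl]
    nlinarith
  refine ⟨hβ4, ?_, fun hC1' => convex_part C1 C2 β hC1' hβ4⟩
  intro x hx
  set γ : ℝ := (2 - β)/4 with hγdef
  have hγneg : γ ≤ -(1/2) := by rw [hγdef]; linarith
  have hu : (fun y => C1 * hGauge d y ^ (2 - β) + C2)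
      = (fun y => C1 * wF d y ^ γ + C2) := u_rpow_eq d C1 C2 β
  have hw := wF_pos d x hx
  have hpow : wF d x ^ (γ-1) = wF d x ^ (γ-2) * wF d x := by
    rw [show γ-1 = (γ-2)+1 from by ring, Real.rpow_add_one hw.ne']
  have hM1 : hHess d (fun y => C1 * hGauge d y ^ (2 - β) + C2) x = NF d C1 γ x := by
    rw [hu]; exact hess_eq x hx
  set K : ℝ := 4*C1*γ*(sF d x * wF d x ^ (γ-1)) with hKdef
  set k1 : ℝ := 4*C1*γ*((4*γ-2) * wF d x ^ (γ-2)) with hk1def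
  set k2 : ℝ := 4*C1*γ*(2 * wF d x ^ (γ-2)) with hk2def
  set Nm : ℝ := sF d x * wF d x with hNmdef
  have hMeq : hHess d (fun y => C1 * hGauge d y ^ (2 - β) + C2) x
      = K • (1 : Matrix (Fin (2*d)) (Fin (2*d)) ℝ)
        + k1 • Matrix.vecMulVec (vF d x) (vF d x)
        + k2 • Matrix.vecMulVec (pF d x) (pF d x) :=
    hM1.trans (NF_decomp x hw)
  have hk1N : k1 * Nm = (4*γ-2) * K := by rw [hk1def, hNmdef, hKdef, hpow]; ring
  have hk2N : k2 * Nm = 2 * K := by rw [hk2def, hNmdef, hKdef, hpow]; ring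
  set g : ℝ → ℝ := fun t => l * max t 0 + L * min t 0 with hgdef
  have hg0 : g 0 = 0 := by simp [hgdef]
  by_cases hK : K = 0
  · have hzero1 : K + k1 * Nm = 0 := by rw [hk1N, hK]; ring
    have hzero2 : K + k2 * Nm = 0 := by rw [hk2N, hK]; ring
    have hsum := sum_g_eig (hHess_herm d (fun y => C1 * hGauge d y ^ (2 - β) + C2) x)
      (vF d x) (pF d x) K k1 k2 Nm (dot_vv d x) (dot_pp d x) (dot_vp d x) (dot_pv d x)
      hMeq g 0 0 0
      (by rw [hzero1, hg0]; ring) (by rw [hzero2, hg0]; ring) (by rw [hK, hg0]; ring)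
    show pucciMinus l L _ = 0
    unfold pucciMinus
    rw [hsum, hzero1, hzero2, hK, hg0]
    ring
  · -- main case
    have hwp : 0 < wF d x ^ (γ-1) := Real.rpow_pos_of_pos hw _
    have hKle : K ≤ 0 := by
      rw [hKdef]
      nlinarith [mul_nonneg hC1 (mul_nonneg (sF_nonneg d x) hwp.le)]
    have hKneg : K < 0 := lt_of_le_of_ne hKle hK
    have ha : K + k1 * Nm = (4*γ-1) * K := by rw [hk1N]; ring
    have hb : K + k2 * Nm = 3 * K := by rw [hk2N]; ring
    set a : ℝ := (4*γ-1) * K with hadef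
    set b : ℝ := 3 * K with hbdef
    have hapos : 0 < a := by rw [hadef]; nlinarith
    have hbneg : b < 0 := by rw [hbdef]; linarith
    have hab : a - b ≠ 0 := by intro h; nlinarith
    have haK : a - K ≠ 0 := by intro h; nlinarith
    have hbK : b - K ≠ 0 := by rw [hbdef]; intro h; apply hK; linarith
    have hga_val : g a = l * a := by
      rw [hgdef]
      simp only
      rw [max_eq_left hapos.le, min_eq_right hapos.le, mul_zero, add_zero]
    have hgb_val : g b = L * b := by
      rw [hgdef]
      simp only
      rw [max_eq_right hbneg.le, min_eq_left hbneg.le, mul_zero, zero_add]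
    have hgK_val : g K = L * K := by
      rw [hgdef]
      simp only
      rw [max_eq_right hKle, min_eq_left hKle, mul_zero, zero_add]
    set A : ℝ := (l*a)/((a-b)*(a-K)) + (L*b)/((b-a)*(b-K)) + (L*K)/((K-a)*(K-b)) with hA
    set B : ℝ := -((l*a)*(b+K)/((a-b)*(a-K)) + (L*b)*(a+K)/((b-a)*(b-K))
      + (L*K)*(a+b)/((K-a)*(K-b))) with hB
    set C : ℝ := (l*a)*(b*K)/((a-b)*(a-K)) + (L*b)*(a*K)/((b-a)*(b-K))
      + (L*K)*(a*b)/((K-a)*(K-b)) with hC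
    have hba : b - a ≠ 0 := fun h => hab (by rw [sub_eq_zero] at h ⊢; exact h.symm)
    have hKa : K - a ≠ 0 := fun h => haK (by rw [sub_eq_zero] at h ⊢; exact h.symm)
    have hKb : K - b ≠ 0 := fun h => hbK (by rw [sub_eq_zero] at h ⊢; exact h.symm)
    have hga : g a = A*a^2 + B*a + C := by
      rw [hga_val, hA, hB, hC]
      field_simp
      ring
    have hgb : g b = A*b^2 + B*b + C := by
      rw [hgb_val, hA, hB, hC]
      field_simp
      ring
    have hgK : g K = A*K^2 + B*K + C := by
      rw [hgK_val, hA, hB, hC]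
      field_simp
      ring
    have hsum := sum_g_eig (hHess_herm d (fun y => C1 * hGauge d y ^ (2 - β) + C2) x)
      (vF d x) (pF d x) K k1 k2 Nm (dot_vv d x) (dot_pp d x) (dot_vp d x) (dot_pv d x)
      hMeq g A B C
      (by rw [ha]; exact hga) (by rw [hb]; exact hgb) hgK
    show pucciMinus l L _ = 0
    unfold pucciMinus
    rw [hsum, ha, hb, hga_val, hgb_val, hgK_val]
    have hlβ : l * (β - 1) = L * (2*(d:ℝ)+1) := by
      rw [hβ]
      field_simp
      ring
    rw [hadef, hbdef, hγdef]
    push_cast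
    linear_combination (-K) * hlβ
end

section
/- Let m : [0,∞) → R be nonnegative and nonincreasing, β > 2, and suppose that for all 0 < r_1 ≤ r ≤ r_2: m(r) ≥ (G(r)/G(r_2)) m(r_2) + (1 − G(r)/G(r_2)) m(r_1), where G(r) = r^{2−β} − r_1^{2−β}. Then the function r ↦ m(r) r^{β−2} is nondecreasing on (0,∞). -/
open Filter Topology Real

/-- if a nonnegative nonincreasing `m` satisfies the Hadamard three-sphere
inequality with `G(r) = r^{2−β} − r₁^{2−β}`, `β > 2`, then `r ↦ m(r)r^{β−2}` is
nondecreasing on `(0,∞)`. -/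
theorem hadamard_monotonicity (β : ℝ) (hβ : 2 < β) (m : ℝ → ℝ)
    (hm0 : ∀ r ≥ (0:ℝ), 0 ≤ m r) (hanti : AntitoneOn m (Set.Ici 0))
    (hH : ∀ r1 r r2 : ℝ, 0 < r1 → r1 ≤ r → r ≤ r2 →
      m r ≥ ((r ^ (2-β) - r1 ^ (2-β)) / (r2 ^ (2-β) - r1 ^ (2-β))) * m r2
        + (1 - (r ^ (2-β) - r1 ^ (2-β)) / (r2 ^ (2-β) - r1 ^ (2-β))) * m r1) :
    MonotoneOn (fun r : ℝ => m r * r ^ (β-2)) (Set.Ioi 0) := by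
  intro a ha b hb hab
  simp only [Set.mem_Ioi] at ha hb
  rcases eq_or_lt_of_le hab with rfl | hab'
  · exact le_refl _
  have hbpos : (0:ℝ) < b := hb
  have hapos : (0:ℝ) < a := ha
  have hane : (0:ℝ) < a ^ (2-β) := Real.rpow_pos_of_pos hapos _
  have hbne : (0:ℝ) < b ^ (2-β) := Real.rpow_pos_of_pos hbpos _
  -- key inequality: m b ≥ b^(2-β)/a^(2-β) * m a
  have key : b ^ (2-β) / a ^ (2-β) * m a ≤ m b := by
    have h0 : Tendsto (fun t : ℝ => t ^ (2-β)) atTop (𝓝 0) := by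
      have := tendsto_rpow_neg_atTop (y := β - 2) (by linarith)
      simpa [neg_sub] using this
    have hb2 : Tendsto (fun t : ℝ => t ^ (2-β) - b ^ (2-β)) atTop (𝓝 (0 - b ^ (2-β))) :=
      h0.sub tendsto_const_nhds
    have ha2 : Tendsto (fun t : ℝ => t ^ (2-β) - a ^ (2-β)) atTop (𝓝 (0 - a ^ (2-β))) :=
      h0.sub tendsto_const_nhds
    have hdne : (0:ℝ) - a ^ (2-β) ≠ 0 := by linarith
    have hlim : Tendsto (fun t : ℝ =>
        (t ^ (2-β) - b ^ (2-β)) / (t ^ (2-β) - a ^ (2-β)) * m a)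
        atTop (𝓝 (b ^ (2-β) / a ^ (2-β) * m a)) := by
      have := (hb2.div ha2 hdne).mul_const (m a)
      have heq : (0 - b ^ (2-β)) / (0 - a ^ (2-β)) = b ^ (2-β) / a ^ (2-β) := by
        rw [zero_sub, zero_sub, neg_div_neg_eq]
      rwa [heq] at this
    refine le_of_tendsto hlim ?_
    filter_upwards [eventually_ge_atTop b] with t htb
    have hta : a < t := lt_of_lt_of_le hab' htb
    have hD : t ^ (2-β) - a ^ (2-β) < 0 := by
      have := Real.rpow_lt_rpow_of_neg hapos hta (by linarith : (2-β) < 0)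
      linarith
    have hN : b ^ (2-β) - a ^ (2-β) ≤ 0 := by
      have := Real.rpow_lt_rpow_of_neg hapos hab' (by linarith : (2-β) < 0)
      linarith
    have hDne : t ^ (2-β) - a ^ (2-β) ≠ 0 := ne_of_lt hD
    have hlam : 0 ≤ (b ^ (2-β) - a ^ (2-β)) / (t ^ (2-β) - a ^ (2-β)) := by
      rw [div_nonneg_iff]; right; exact ⟨hN, hD.le⟩
    have hmt : 0 ≤ m t := hm0 t (le_trans hbpos.le htb)
    have h := hH a b t hapos hab'.le htb
    have hfrac : 1 - (b ^ (2-β) - a ^ (2-β)) / (t ^ (2-β) - a ^ (2-β))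
        = (t ^ (2-β) - b ^ (2-β)) / (t ^ (2-β) - a ^ (2-β)) := by
      field_simp
      ring
    have hma : 0 ≤ m a := hm0 a hapos.le
    calc (t ^ (2-β) - b ^ (2-β)) / (t ^ (2-β) - a ^ (2-β)) * m a
        = (1 - (b ^ (2-β) - a ^ (2-β)) / (t ^ (2-β) - a ^ (2-β))) * m a := by rw [hfrac]
      _ ≤ (b ^ (2-β) - a ^ (2-β)) / (t ^ (2-β) - a ^ (2-β)) * m t
          + (1 - (b ^ (2-β) - a ^ (2-β)) / (t ^ (2-β) - a ^ (2-β))) * m a := by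
          nlinarith [mul_nonneg hlam hmt]
      _ ≤ m b := h
  -- conclude
  have hab2 : a ^ (2-β) * a ^ (β-2) = 1 := by
    rw [← Real.rpow_add hapos]; norm_num
  have hbb2 : b ^ (2-β) * b ^ (β-2) = 1 := by
    rw [← Real.rpow_add hbpos]; norm_num
  have hbpow : (0:ℝ) < b ^ (β-2) := Real.rpow_pos_of_pos hbpos _
  have h2 := mul_le_mul_of_nonneg_right key hbpow.le
  -- h2 : b^(2-β)/a^(2-β) * m a * b^(β-2) ≤ m b * b^(β-2)
  have ha' : a ^ (β-2) = (a ^ (2-β))⁻¹ := by rw [← Real.rpow_neg hapos.le, neg_sub]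
  have hb' : b ^ (β-2) = (b ^ (2-β))⁻¹ := by rw [← Real.rpow_neg hbpos.le, neg_sub]
  have h3 : b ^ (2-β) / a ^ (2-β) * m a * b ^ (β-2) = m a * a ^ (β-2) := by
    rw [ha', hb']; field_simp
  simpa [h3] using h2
end

section
/- Let β > 3 and R_1 ≥ exp((2β−3)/((β−2)(β−1))) − 1. Then the function g(r) = log(1+r)/r^{β−2} is convex and nonincreasing on [R_1, ∞). -/
open Real Set

private lemma deriv1 (β : ℝ) {r : ℝ} (hr : 0 < r) :
    HasDerivAt (fun r : ℝ => Real.log (1+r) / r ^ (β-2))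
      ((r/(1+r) - (β-2) * Real.log (1+r)) / r ^ (β-1)) r := by
  have h1r : (0:ℝ) < 1 + r := by linarith
  have hA : 0 < r ^ (β-2) := Real.rpow_pos_of_pos hr _
  have hL : HasDerivAt (fun r : ℝ => Real.log (1+r)) (1/(1+r)) r := by
    have h := ((hasDerivAt_id r).const_add 1).log h1r.ne'
    simpa using h
  have hD : HasDerivAt (fun r : ℝ => r ^ (β-2)) ((β-2) * r ^ (β-2-1)) r :=
    Real.hasDerivAt_rpow_const (Or.inl hr.ne')
  have h := hL.div hD hA.ne'
  refine h.congr_deriv ?_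
  have e1 : r ^ (β-2-1) = r ^ (β-2) / r := by
    rw [show β-2-1 = (β-2) - 1 by ring, Real.rpow_sub hr, Real.rpow_one]
  have e2 : r ^ (β-1) = r ^ (β-2) * r := by
    rw [show β-1 = (β-2) + 1 by ring, Real.rpow_add hr, Real.rpow_one]
  rw [e1, e2]
  field_simp

private lemma deriv2 (β : ℝ) {r : ℝ} (hr : 0 < r) :
    HasDerivAt (fun r : ℝ => (r/(1+r) - (β-2) * Real.log (1+r)) / r ^ (β-1))
      (((β-2)*(β-1)*Real.log (1+r) - 2*(β-2)*r/(1+r) - r^2/(1+r)^2) / r ^ β) r := by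
  have h1r : (0:ℝ) < 1 + r := by linarith
  have hB : 0 < r ^ (β-1) := Real.rpow_pos_of_pos hr _
  have hL : HasDerivAt (fun r : ℝ => Real.log (1+r)) (1/(1+r)) r := by
    have h := ((hasDerivAt_id r).const_add 1).log h1r.ne'
    simpa using h
  have hN1 : HasDerivAt (fun r : ℝ => r/(1+r))
      ((1*(1+r) - r*1)/(1+r)^2) r :=
    (hasDerivAt_id r).div ((hasDerivAt_id r).const_add 1) h1r.ne'
  have hN : HasDerivAt (fun r : ℝ => r/(1+r) - (β-2) * Real.log (1+r))
      ((1*(1+r) - r*1)/(1+r)^2 - (β-2) * (1/(1+r))) r :=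
    hN1.sub (hL.const_mul (β-2))
  have hD : HasDerivAt (fun r : ℝ => r ^ (β-1)) ((β-1) * r ^ (β-1-1)) r :=
    Real.hasDerivAt_rpow_const (Or.inl hr.ne')
  have h := hN.div hD hB.ne'
  refine h.congr_deriv ?_
  have e1 : r ^ (β-1-1) = r ^ (β-1) / r := by
    rw [show β-1-1 = (β-1) - 1 by ring, Real.rpow_sub hr, Real.rpow_one]
  have e2 : r ^ β = r ^ (β-1) * r := by
    rw [← Real.rpow_add_one hr.ne', sub_add_cancel]
  rw [e1, e2]
  field_simp
  ring

/-- for `β > 3` and `R₁ ≥ exp((2β−3)/((β−2)(β−1))) − 1`, the function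
`g(r) = log(1+r)/r^{β−2}` is convex and nonincreasing on `[R₁,∞)`. -/
theorem log_over_power_convex_antitone (β R1 : ℝ) (hβ : 3 < β)
    (hR1 : Real.exp ((2*β - 3) / ((β-2)*(β-1))) - 1 ≤ R1) :
    ConvexOn ℝ (Set.Ici R1) (fun r : ℝ => Real.log (1+r) / r ^ (β-2)) ∧
    AntitoneOn (fun r : ℝ => Real.log (1+r) / r ^ (β-2)) (Set.Ici R1) := by
  set c : ℝ := (2*β - 3) / ((β-2)*(β-1)) with hc_def
  have hc : 0 < c := div_pos (by linarith) (mul_pos (by linarith) (by linarith))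
  have hb2 : β - 2 ≠ 0 := ne_of_gt (by linarith)
  have hb1 : β - 1 ≠ 0 := ne_of_gt (by linarith)
  have hprod : (β-2)*(β-1)*c = 2*β-3 := by
    rw [hc_def]
    linear_combination div_mul_cancel₀ (2*β-3) (mul_ne_zero hb2 hb1)
  have hR1pos : 0 < R1 := by
    have h1 : (1:ℝ) < Real.exp c := by
      rw [← Real.exp_zero]; exact Real.exp_lt_exp.mpr hc
    linarith
  -- lower bound on log for points in the domain
  have hlog : ∀ r : ℝ, R1 ≤ r → c ≤ Real.log (1+r) := by
    intro r hr
    have h1r : (0:ℝ) < 1 + r := by linarith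
    refine (Real.le_log_iff_exp_le h1r).mpr ?_
    linarith
  set g : ℝ → ℝ := fun r : ℝ => Real.log (1+r) / r ^ (β-2) with hg_def
  have hdiffOn : DifferentiableOn ℝ g (interior (Set.Ici R1)) := by
    intro x hx
    rw [interior_Ici] at hx
    exact ((deriv1 β (lt_trans hR1pos hx)).differentiableAt).differentiableWithinAt
  have hcont : ContinuousOn g (Set.Ici R1) := by
    intro x hx
    exact ((deriv1 β (lt_of_lt_of_le hR1pos hx)).differentiableAt).continuousAt.continuousWithinAt
  -- deriv g agrees with the explicit formula on (0,∞)
  have hderiv_eq : ∀ x : ℝ, 0 < x →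
      deriv g x = (x/(1+x) - (β-2) * Real.log (1+x)) / x ^ (β-1) := by
    intro x hx
    exact (deriv1 β hx).deriv
  have hderiv2 : ∀ x : ℝ, 0 < x →
      HasDerivAt (deriv g)
        (((β-2)*(β-1)*Real.log (1+x) - 2*(β-2)*x/(1+x) - x^2/(1+x)^2) / x ^ β) x := by
    intro x hx
    refine (deriv2 β hx).congr_of_eventuallyEq ?_
    filter_upwards [isOpen_Ioi.mem_nhds hx] with y hy
    exact hderiv_eq y hy
  constructor
  · refine convexOn_of_deriv2_nonneg (convex_Ici R1) hcont hdiffOn ?_ ?_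
    · intro x hx
      rw [interior_Ici] at hx
      exact ((hderiv2 x (lt_trans hR1pos hx)).differentiableAt).differentiableWithinAt
    · intro x hx
      rw [interior_Ici] at hx
      have hx0 : 0 < x := lt_trans hR1pos hx
      have h1x : (0:ℝ) < 1 + x := by linarith
      have hL : c ≤ Real.log (1+x) := hlog x hx.le
      have heq : deriv^[2] g x
          = ((β-2)*(β-1)*Real.log (1+x) - 2*(β-2)*x/(1+x) - x^2/(1+x)^2) / x ^ β := by
        simp only [Function.iterate_succ, Function.iterate_zero, Function.comp_apply, id_eq]
        exact (hderiv2 x hx0).deriv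
      rw [heq]
      apply div_nonneg _ (Real.rpow_pos_of_pos hx0 β).le
      set t : ℝ := x/(1+x) with ht_def
      have ht0 : 0 ≤ t := div_nonneg hx0.le h1x.le
      have ht1 : t ≤ 1 := by
        rw [ht_def, div_le_one h1x]; linarith
      have hnum : (β-2)*(β-1)*Real.log (1+x) - 2*(β-2)*x/(1+x) - x^2/(1+x)^2
          = (β-2)*(β-1)*Real.log (1+x) - 2*(β-2)*t - t^2 := by
        rw [ht_def, div_pow]; ring
      rw [hnum]
      have hcL : (2*β - 3) ≤ (β-2)*(β-1)*Real.log (1+x) := by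
        have h2 : (β-2)*(β-1)*c ≤ (β-2)*(β-1)*Real.log (1+x) :=
          mul_le_mul_of_nonneg_left hL (by nlinarith)
        linarith
      nlinarith [mul_nonneg (sub_nonneg.mpr ht1) ht0,
        mul_nonneg (by linarith : (0:ℝ) ≤ β-2) (sub_nonneg.mpr ht1),
        mul_nonneg (sub_nonneg.mpr ht1) (by linarith : (0:ℝ) ≤ 1 + t)]
  · refine antitoneOn_of_deriv_nonpos (convex_Ici R1) hcont hdiffOn ?_
    intro x hx
    rw [interior_Ici] at hx
    have hx0 : 0 < x := lt_trans hR1pos hx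
    have h1x : (0:ℝ) < 1 + x := by linarith
    have hL : c ≤ Real.log (1+x) := hlog x hx.le
    rw [hderiv_eq x hx0]
    apply div_nonpos_of_nonpos_of_nonneg _ (Real.rpow_pos_of_pos hx0 _).le
    have hX : 1 ≤ (β-2)*c := by nlinarith [hprod]
    have h2 : (β-2)*c ≤ (β-2) * Real.log (1+x) :=
      mul_le_mul_of_nonneg_left hL (by linarith)
    have h3 : x/(1+x) < 1 := (div_lt_one h1x).mpr (by linarith)
    linarith
end
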